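/- arXiv:2008.10321 — 5 statements merged into one kernel-verified Lean document; each statement's English description precedes it below -/
import Mathlib

section
/- For any constant matrix A ∈ ℝ^{n×n}, any k ∈ [1,n], and any t ∈ ℝ, exp(A^{[k]} t) = (exp(At))^{(k)}; i.e., the matrix exponential of the k-th additive compound of A equals the k-th multiplicative compound of the matrix exponential of A. (For k = n this reduces to the Abel–Jacobi–Liouville identity det(exp(At)) = exp(tr(A)t).) -/
open Matrix Set Filter
open scoped ENNReal

noncomputable section

/-- Increasing `k`-element subsets of `Fin n` (row/column index type of compounds). -/
abbrev IdxK (n k : ℕ) := {s : Finset (Fin n) // s.card = k}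

/-- The `k`-th multiplicative compound of a matrix: the matrix of all `k × k` minors,
indexed by `k`-element subsets of row/column indices (ordered increasingly). -/
noncomputable def mulCompound {n m : ℕ} (k : ℕ) (A : Matrix (Fin n) (Fin m) ℝ) :
    Matrix (IdxK n k) (IdxK m k) ℝ := fun κ lam =>
  (Matrix.of fun i j : Fin k =>
    A (κ.1.orderIsoOfFin κ.2 i).1 (lam.1.orderIsoOfFin lam.2 j).1).det

/-- The `k`-th additive compound: derivative at `ε = 0` of `ε ↦ (I + εA)^{(k)}`. -/
noncomputable def addCompound {n : ℕ} (k : ℕ) (A : Matrix (Fin n) (Fin n) ℝ) :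
    Matrix (IdxK n k) (IdxK n k) ℝ := fun κ lam =>
  deriv (fun ε : ℝ => mulCompound k ((1 : Matrix (Fin n) (Fin n) ℝ) + ε • A) κ lam) 0

/-- Wedge product of `k` vectors in `ℝ^n`, as the `k`-th multiplicative compound of the
`n × k` matrix whose columns are the given vectors. -/
noncomputable def wedge {n k : ℕ} (u : Fin k → (Fin n → ℝ)) : IdxK n k → ℝ := fun κ =>
  mulCompound k (Matrix.of fun i j => u j i) κ ⟨Finset.univ, by simp⟩

/-- `N` is a norm on `ι → ℝ`. -/
structure IsNorm {ι : Type*} [Fintype ι] (N : (ι → ℝ) → ℝ) : Prop where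
  nonneg : ∀ x, 0 ≤ N x
  eq_zero_iff : ∀ x, N x = 0 ↔ x = 0
  triangle : ∀ x y, N (x + y) ≤ N x + N y
  homog : ∀ (c : ℝ) (x), N (c • x) = |c| * N x

/-- Operator norm of a matrix induced by the vector norm `N`. -/
noncomputable def inducedNorm {ι : Type*} [Fintype ι] (N : (ι → ℝ) → ℝ)
    (M : Matrix ι ι ℝ) : ℝ :=
  sSup {c : ℝ | ∃ x : ι → ℝ, N x = 1 ∧ c = N (M.mulVec x)}

/-- Matrix measure (logarithmic norm) induced by the vector norm `N`:
`μ(M) = lim_{ε→0⁺} (‖I + εM‖ - 1)/ε`, i.e. the one-sided derivative at `0`. -/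
noncomputable def matMeasure {ι : Type*} [Fintype ι] [DecidableEq ι] (N : (ι → ℝ) → ℝ)
    (M : Matrix ι ι ℝ) : ℝ :=
  derivWithin (fun ε : ℝ => inducedNorm N ((1 : Matrix ι ι ℝ) + ε • M)) (Set.Ici 0) 0

/-- The `L_p` norm on `ι → ℝ` for `p ∈ [1,∞]` (`p = ⊤` is the sup norm). -/
noncomputable def lpnorm {ι : Type*} [Fintype ι] (p : ℝ≥0∞) (x : ι → ℝ) : ℝ :=
  if p = ⊤ then ⨆ i, |x i| else (∑ i, |x i| ^ p.toReal) ^ (1 / p.toReal)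


namespace AJL

variable {n k : ℕ}

/-- The increasing enumeration of a `k`-subset, as a map `Fin k → Fin n`. -/
def emb (s : IdxK n k) : Fin k → Fin n := fun i => (s.1.orderIsoOfFin s.2 i).1

lemma emb_mem (s : IdxK n k) (i : Fin k) : emb s i ∈ s.1 := (s.1.orderIsoOfFin s.2 i).2

lemma emb_injective (s : IdxK n k) : Function.Injective (emb s) := fun i j h =>
  (s.1.orderIsoOfFin s.2).injective (Subtype.ext h)

lemma emb_surjOn (s : IdxK n k) {x : Fin n} (hx : x ∈ s.1) : ∃ i, emb s i = x :=
  ⟨(s.1.orderIsoOfFin s.2).symm ⟨x, hx⟩, by simp [emb]⟩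

lemma mulCompound_apply {m : ℕ} (A : Matrix (Fin n) (Fin m) ℝ) (κ : IdxK n k) (lam : IdxK m k) :
    mulCompound k A κ lam = (A.submatrix (emb κ) (emb lam)).det := rfl

lemma image_emb_comp (s : IdxK n k) (τ : Equiv.Perm (Fin k)) :
    Finset.image (emb s ∘ τ) Finset.univ = s.1 := by
  ext x
  simp only [Finset.mem_image, Function.comp_apply, Finset.mem_univ, true_and]
  constructor
  · rintro ⟨i, rfl⟩; exact emb_mem s _
  · intro hx
    obtain ⟨i, hi⟩ := emb_surjOn s hx
    exact ⟨τ.symm i, by simp [hi]⟩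

theorem cauchy_binet (M : Matrix (Fin k) (Fin n) ℝ) (N : Matrix (Fin n) (Fin k) ℝ) :
    (M * N).det = ∑ s : IdxK n k,
      (M.submatrix id (emb s)).det * (N.submatrix (emb s) id).det := by
  classical
  -- Step A: expand by multilinearity in the rows
  have hrows : (M * N).det
      = Matrix.detRowAlternating (fun i => ∑ l : Fin n, M i l • (N l : Fin k → ℝ)) := by
    apply congrArg
    funext i j
    simp [Matrix.mul_apply]
  have hA : (M * N).det = ∑ r : Fin k → Fin n,
      (∏ i, M i (r i)) * (N.submatrix r id).det := by
    rw [hrows]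
    rw [show (Matrix.detRowAlternating (R := ℝ) (n := Fin k))
        (fun i => ∑ l : Fin n, M i l • (N l : Fin k → ℝ))
      = ∑ r : Fin k → Fin n, Matrix.detRowAlternating (fun i => M i (r i) • (N (r i) : Fin k → ℝ))
      from Matrix.detRowAlternating.toMultilinearMap.map_sum (fun i l => M i l • (N l : Fin k → ℝ))]
    refine Finset.sum_congr rfl fun r _ => ?_
    rw [show (Matrix.detRowAlternating (R := ℝ) (n := Fin k))
        (fun i => M i (r i) • (N (r i) : Fin k → ℝ))
      = (∏ i, M i (r i)) • Matrix.detRowAlternating (fun i => (N (r i) : Fin k → ℝ))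
      from Matrix.detRowAlternating.toMultilinearMap.map_smul_univ (fun i => M i (r i))
        (fun i => (N (r i) : Fin k → ℝ))]
    rw [smul_eq_mul]
    rfl
  rw [hA]
  -- Step B: non-injective terms vanish
  have hB : ∑ r : Fin k → Fin n, (∏ i, M i (r i)) * (N.submatrix r id).det
      = ∑ r ∈ Finset.univ.filter (fun r : Fin k → Fin n => Function.Injective r),
          (∏ i, M i (r i)) * (N.submatrix r id).det := by
    refine (Finset.sum_filter_of_ne fun r _ hne => ?_).symm
    by_contra hinj
    apply hne
    rw [Function.Injective] at hinj
    push_neg at hinj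
    obtain ⟨i, j, hij, hne'⟩ := hinj
    have : (N.submatrix r id).det = 0 :=
      Matrix.det_zero_of_row_eq hne' (by
        funext l; simp [Matrix.submatrix_apply, hij])
    simp [this]
  rw [hB]
  -- Step C: reparametrize injective maps by (subset, permutation)
  have hC : ∑ p : IdxK n k × Equiv.Perm (Fin k),
        (∏ i, M i ((emb p.1 ∘ p.2) i)) * (N.submatrix (emb p.1 ∘ p.2) id).det
      = ∑ r ∈ Finset.univ.filter (fun r : Fin k → Fin n => Function.Injective r),
          (∏ i, M i (r i)) * (N.submatrix r id).det := by
    refine Finset.sum_bij (fun p _ => emb p.1 ∘ p.2) ?_ ?_ ?_ ?_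
    · intro p _
      simp only [Finset.mem_filter, Finset.mem_univ, true_and]
      exact (emb_injective p.1).comp p.2.injective
    · rintro ⟨s₁, τ₁⟩ _ ⟨s₂, τ₂⟩ _ h
      have h' : emb s₁ ∘ τ₁ = emb s₂ ∘ τ₂ := h
      have hs : s₁ = s₂ := Subtype.ext (by
        rw [← image_emb_comp s₁ τ₁, ← image_emb_comp s₂ τ₂]
        exact congrArg (fun f => Finset.image f Finset.univ) h')
      subst hs
      have hτ : τ₁ = τ₂ := Equiv.ext fun i => emb_injective s₁ (congrFun h' i)
      rw [hτ]
    · intro r hr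
      simp only [Finset.mem_filter, Finset.mem_univ, true_and] at hr
      have hcard : (Finset.image r Finset.univ).card = k := by
        rw [Finset.card_image_of_injective _ hr, Finset.card_univ, Fintype.card_fin]
      set s : IdxK n k := ⟨Finset.image r Finset.univ, hcard⟩ with hs
      have hmem : ∀ i, r i ∈ s.1 := fun i => Finset.mem_image_of_mem r (Finset.mem_univ i)
      set τ0 : Fin k → Fin k := fun i => (s.1.orderIsoOfFin s.2).symm ⟨r i, hmem i⟩ with hτ0
      have hτ0inj : Function.Injective τ0 := by
        intro i j hij
        apply hr
        have := congrArg (fun x => ((s.1.orderIsoOfFin s.2) x : Fin n)) hij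
        simpa [hτ0] using this
      refine ⟨⟨s, Equiv.ofBijective τ0 (Finite.injective_iff_bijective.mp hτ0inj)⟩,
        Finset.mem_univ _, ?_⟩
      funext i
      simp [emb, Equiv.ofBijective_apply, hτ0]
    · intro p _
      rfl
  rw [← hC, Fintype.sum_prod_type]
  -- Step D: sum over permutations gives the determinant of the M-block
  refine Finset.sum_congr rfl fun s _ => ?_
  have hperm : ∀ τ : Equiv.Perm (Fin k),
      (N.submatrix (emb s ∘ τ) id).det
        = ((Equiv.Perm.sign τ : ℤ) : ℝ) * (N.submatrix (emb s) id).det := by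
    intro τ
    have h1 : N.submatrix (emb s ∘ τ) id = (N.submatrix (emb s) id).submatrix τ id := by
      simp [Matrix.submatrix_submatrix]
    rw [h1, Matrix.det_permute]
    try push_cast
    try ring
  have hprod : ∀ τ : Equiv.Perm (Fin k),
      (∏ i, M i ((emb s ∘ τ) i)) = ∏ i, M (τ.symm i) (emb s i) := by
    intro τ
    calc (∏ i, M i ((emb s ∘ τ) i))
        = ∏ i, (fun j => M (τ.symm j) (emb s j)) (τ i) := by
          refine Finset.prod_congr rfl fun i _ => ?_
          simp
      _ = ∏ j, M (τ.symm j) (emb s j) := Equiv.prod_comp τ (fun j => M (τ.symm j) (emb s j))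
  calc ∑ τ : Equiv.Perm (Fin k),
        (∏ i, M i ((emb s ∘ τ) i)) * (N.submatrix (emb s ∘ τ) id).det
      = ∑ τ : Equiv.Perm (Fin k),
          ((Equiv.Perm.sign τ : ℤ) : ℝ) * (∏ i, M (τ.symm i) (emb s i))
            * (N.submatrix (emb s) id).det := by
        refine Finset.sum_congr rfl fun τ _ => ?_
        rw [hperm τ, hprod τ]
        ring
    _ = ∑ σ : Equiv.Perm (Fin k),
          ((Equiv.Perm.sign σ : ℤ) : ℝ) * (∏ i, M (σ i) (emb s i))
            * (N.submatrix (emb s) id).det := by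
        refine Fintype.sum_equiv (Equiv.inv (Equiv.Perm (Fin k))) _ _ fun τ => ?_
        simp [Equiv.inv_apply, Equiv.Perm.sign_inv, Equiv.Perm.inv_def]
    _ = (M.submatrix id (emb s)).det * (N.submatrix (emb s) id).det := by
        rw [← Finset.sum_mul]
        congr 1
        rw [Matrix.det_apply']
        refine Finset.sum_congr rfl fun σ _ => ?_
        simp [Matrix.submatrix_apply]


theorem mulCompound_mul (A B : Matrix (Fin n) (Fin n) ℝ) :
    mulCompound k (A * B) = mulCompound k A * mulCompound k B := by
  ext κ lam
  have h1 : (A * B).submatrix (emb κ) (emb lam)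
      = (A.submatrix (emb κ) id) * (B.submatrix id (emb lam)) := by
    ext i j
    simp [Matrix.mul_apply, Matrix.submatrix_apply]
  rw [Matrix.mul_apply, mulCompound_apply, h1, cauchy_binet]
  refine Finset.sum_congr rfl fun s _ => ?_
  rw [mulCompound_apply, mulCompound_apply]
  simp [Matrix.submatrix_submatrix, Function.comp_def]

theorem mulCompound_one :
    mulCompound k (1 : Matrix (Fin n) (Fin n) ℝ) = 1 := by
  ext κ lam
  rw [mulCompound_apply]
  by_cases h : κ = lam
  · subst h
    have h1 : (1 : Matrix (Fin n) (Fin n) ℝ).submatrix (emb κ) (emb κ)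
        = (1 : Matrix (Fin k) (Fin k) ℝ) := by
      ext i j
      by_cases hij : i = j
      · subst hij; simp [Matrix.one_apply]
      · rw [Matrix.one_apply_ne hij, Matrix.submatrix_apply,
          Matrix.one_apply_ne (fun hc => hij (emb_injective κ hc))]
    rw [h1, Matrix.det_one, Matrix.one_apply_eq]
  · -- some element of κ is not in lam, so a row vanishes
    have hne : ¬ κ.1 ⊆ lam.1 := by
      intro hsub
      exact h (Subtype.ext (Finset.eq_of_subset_of_card_le hsub (by rw [κ.2, lam.2])))
    obtain ⟨x, hxκ, hxlam⟩ := Finset.not_subset.mp hne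
    obtain ⟨i0, hi0⟩ := emb_surjOn κ hxκ
    have hrow : ∀ j, (1 : Matrix (Fin n) (Fin n) ℝ).submatrix (emb κ) (emb lam) i0 j = 0 := by
      intro j
      rw [Matrix.submatrix_apply, Matrix.one_apply_ne]
      intro hc
      rw [hi0] at hc
      exact hxlam (hc ▸ emb_mem lam j)
    rw [Matrix.det_eq_zero_of_row_eq_zero i0 hrow, Matrix.one_apply_ne h]

/-- Derivative of `det` along a curve: depends only on the value and the entry derivatives. -/
def detDeriv (P P' : Matrix (Fin k) (Fin k) ℝ) : ℝ :=
  ∑ σ : Equiv.Perm (Fin k), ((Equiv.Perm.sign σ : ℤ) : ℝ) *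
    ∑ i, (∏ j ∈ Finset.univ.erase i, P (σ j) j) • P' (σ i) i

theorem hasDerivAt_det {Z : ℝ → Matrix (Fin k) (Fin k) ℝ} {Z' : Matrix (Fin k) (Fin k) ℝ}
    {t : ℝ} (h : ∀ i j, HasDerivAt (fun u => Z u i j) (Z' i j) t) :
    HasDerivAt (fun u => (Z u).det) (detDeriv (Z t) Z') t := by
  simp only [Matrix.det_apply']
  exact HasDerivAt.fun_sum fun σ _ =>
    (HasDerivAt.fun_finsetProd fun i _ => h (σ i) i).const_mul _


section ExpEntry

variable {ι : Type*} [Fintype ι] [DecidableEq ι]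

theorem hasDerivAt_exp_entry (X : Matrix ι ι ℝ) (t : ℝ) (i j : ι) :
    HasDerivAt (fun u : ℝ => NormedSpace.exp (u • X) i j)
      ((NormedSpace.exp (t • X) * X) i j) t := by
  letI : SeminormedRing (Matrix ι ι ℝ) := Matrix.linftyOpSemiNormedRing
  letI : NormedRing (Matrix ι ι ℝ) := Matrix.linftyOpNormedRing
  letI : NormedAlgebra ℝ (Matrix ι ι ℝ) := Matrix.linftyOpNormedAlgebra
  have H : HasDerivAt (fun u : ℝ => NormedSpace.exp (u • X))
      (NormedSpace.exp (t • X) * X) t := hasDerivAt_exp_smul_const X t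
  let L : Matrix ι ι ℝ →ₗ[ℝ] ℝ :=
    { toFun := fun M => M i j, map_add' := fun _ _ => rfl, map_smul' := fun _ _ => rfl }
  have h := (LinearMap.toContinuousLinearMap L).hasFDerivAt.comp_hasDerivAt t H
  exact h

end ExpEntry

section Main

variable {n k : ℕ} (A : Matrix (Fin n) (Fin n) ℝ)

theorem key1 (t : ℝ) (κ lam : IdxK n k) :
    HasDerivAt (fun u : ℝ => mulCompound k (NormedSpace.exp (u • A)) κ lam)
      (detDeriv ((NormedSpace.exp (t • A)).submatrix (emb κ) (emb lam))
        (((NormedSpace.exp (t • A)) * A).submatrix (emb κ) (emb lam))) t := by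
  have h : ∀ i j, HasDerivAt
      (fun u : ℝ => ((NormedSpace.exp (u • A)).submatrix (emb κ) (emb lam)) i j)
      ((((NormedSpace.exp (t • A)) * A).submatrix (emb κ) (emb lam)) i j) t :=
    fun i j => hasDerivAt_exp_entry A t (emb κ i) (emb lam j)
  have h2 := hasDerivAt_det (Z := fun u => (NormedSpace.exp (u • A)).submatrix (emb κ) (emb lam)) h
  simpa [mulCompound_apply] using h2

theorem key2 (κ lam : IdxK n k) :
    HasDerivAt (fun u : ℝ => mulCompound k ((1 : Matrix (Fin n) (Fin n) ℝ) + u • A) κ lam)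
      (detDeriv (((1 : Matrix (Fin n) (Fin n) ℝ)).submatrix (emb κ) (emb lam))
        (A.submatrix (emb κ) (emb lam))) 0 := by
  have h : ∀ i j, HasDerivAt
      (fun u : ℝ => (((1 : Matrix (Fin n) (Fin n) ℝ) + u • A).submatrix (emb κ) (emb lam)) i j)
      ((A.submatrix (emb κ) (emb lam)) i j) 0 := by
    intro i j
    have hfun : (fun u : ℝ => (((1 : Matrix (Fin n) (Fin n) ℝ) + u • A).submatrix (emb κ) (emb lam)) i j)
        = fun u : ℝ => (1 : Matrix (Fin n) (Fin n) ℝ) (emb κ i) (emb lam j)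
            + u * A (emb κ i) (emb lam j) := by
      funext u
      simp [Matrix.add_apply, Matrix.smul_apply, smul_eq_mul]
    rw [hfun]
    simpa using ((hasDerivAt_id (0 : ℝ)).mul_const (A (emb κ i) (emb lam j))).const_add
      ((1 : Matrix (Fin n) (Fin n) ℝ) (emb κ i) (emb lam j))
  have h2 := hasDerivAt_det
    (Z := fun u : ℝ => ((1 : Matrix (Fin n) (Fin n) ℝ) + u • A).submatrix (emb κ) (emb lam)) h
  simpa [mulCompound_apply] using h2

theorem addCompound_eq (κ lam : IdxK n k) :
    addCompound k A κ lam
      = detDeriv (((1 : Matrix (Fin n) (Fin n) ℝ)).submatrix (emb κ) (emb lam))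
          (A.submatrix (emb κ) (emb lam)) :=
  (key2 A κ lam).deriv

theorem key0 (κ lam : IdxK n k) :
    HasDerivAt (fun u : ℝ => mulCompound k (NormedSpace.exp (u • A)) κ lam)
      (addCompound k A κ lam) 0 := by
  have h := key1 A 0 κ lam
  rw [addCompound_eq]
  simpa [zero_smul, NormedSpace.exp_zero] using h

theorem gmul (s t : ℝ) :
    mulCompound k (NormedSpace.exp ((s + t) • A))
      = mulCompound k (NormedSpace.exp (s • A)) * mulCompound k (NormedSpace.exp (t • A)) := by
  rw [add_smul, Matrix.exp_add_of_commute _ _ (((Commute.refl A).smul_left s).smul_right t),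
    mulCompound_mul]

theorem key3 (t : ℝ) (κ lam : IdxK n k) :
    HasDerivAt (fun u : ℝ => mulCompound k (NormedSpace.exp (u • A)) κ lam)
      ((addCompound k A * mulCompound k (NormedSpace.exp (t • A))) κ lam) t := by
  have hfun : (fun u : ℝ => mulCompound k (NormedSpace.exp (u • A)) κ lam)
      = fun u : ℝ => ∑ μ, mulCompound k (NormedSpace.exp ((u - t) • A)) κ μ
          * mulCompound k (NormedSpace.exp (t • A)) μ lam := by
    funext u
    rw [← Matrix.mul_apply, ← gmul A (u - t) t, show u - t + t = u from by ring]
  rw [hfun]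
  have hterm : ∀ μ : IdxK n k,
      HasDerivAt (fun u : ℝ => mulCompound k (NormedSpace.exp ((u - t) • A)) κ μ)
        (addCompound k A κ μ) t := by
    intro μ
    have h0 : HasDerivAt (fun v : ℝ => mulCompound k (NormedSpace.exp (v • A)) κ μ)
        (addCompound k A κ μ) (t - t) := by
      rw [sub_self]; exact key0 A κ μ
    have hin : HasDerivAt (fun u : ℝ => u - t) 1 t := (hasDerivAt_id t).sub_const t
    have h := HasDerivAt.comp (h := fun u : ℝ => u - t) t h0 hin
    simpa [Function.comp_def, mul_one] using h
  have hsum := HasDerivAt.fun_sum (u := Finset.univ) fun μ _ =>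
    (hterm μ).mul_const (mulCompound k (NormedSpace.exp (t • A)) μ lam)
  simpa [Matrix.mul_apply] using hsum

end Main


theorem main {n : ℕ} (k : ℕ) (A : Matrix (Fin n) (Fin n) ℝ) (t : ℝ) :
    NormedSpace.exp (t • addCompound k A) = mulCompound k (NormedSpace.exp (t • A)) := by
  classical
  set B := addCompound k A with hB
  -- each entry of `exp(u • (-B)) * mulCompound k (exp (u • A))` has zero derivative
  have hphi : ∀ (κ lam : IdxK n k) (u : ℝ),
      HasDerivAt (fun v : ℝ => ∑ μ, NormedSpace.exp (v • (-B)) κ μ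
        * mulCompound k (NormedSpace.exp (v • A)) μ lam) 0 u := by
    intro κ lam u
    have hsum := HasDerivAt.fun_sum (u := Finset.univ) fun μ _ =>
      (hasDerivAt_exp_entry (-B) u κ μ).mul (key3 A u μ lam)
    convert hsum using 1
    · rfl
    · rfl
    · rfl
    set X := NormedSpace.exp (u • (-B)) with hX
    set G := mulCompound k (NormedSpace.exp (u • A)) with hG
    symm
    calc ∑ μ, ((X * (-B)) κ μ * G μ lam + X κ μ * (B * G) μ lam)
        = (X * (-B) * G) κ lam + (X * (B * G)) κ lam := by
          rw [Finset.sum_add_distrib]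
          rw [← Matrix.mul_apply (M := X * (-B)) (N := G), ← Matrix.mul_apply]
      _ = 0 := by
          simp [Matrix.mul_neg, Matrix.neg_mul, Matrix.mul_assoc]
  have hEG : ∀ u : ℝ,
      NormedSpace.exp (u • (-B)) * mulCompound k (NormedSpace.exp (u • A)) = 1 := by
    intro u
    ext κ lam
    rw [Matrix.mul_apply]
    have hconst := is_const_of_deriv_eq_zero
      (f := fun v : ℝ => ∑ μ, NormedSpace.exp (v • (-B)) κ μ
        * mulCompound k (NormedSpace.exp (v • A)) μ lam)
      (fun v => (hphi κ lam v).differentiableAt) (fun v => (hphi κ lam v).deriv) u 0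
    rw [hconst]
    simp only [zero_smul, NormedSpace.exp_zero, mulCompound_one]
    rw [← Matrix.mul_apply, Matrix.one_mul]
  have hBB : NormedSpace.exp (t • B) * NormedSpace.exp (t • (-B)) = 1 := by
    have hcomm : Commute (t • B) (t • (-B)) := by
      rw [smul_neg]; exact (Commute.refl (t • B)).neg_right
    rw [← Matrix.exp_add_of_commute _ _ hcomm, smul_neg, add_neg_cancel,
      NormedSpace.exp_zero]
  calc NormedSpace.exp (t • B)
      = NormedSpace.exp (t • B)
        * (NormedSpace.exp (t • (-B)) * mulCompound k (NormedSpace.exp (t • A))) := by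
        rw [hEG, mul_one]
    _ = (NormedSpace.exp (t • B) * NormedSpace.exp (t • (-B)))
        * mulCompound k (NormedSpace.exp (t • A)) := by rw [mul_assoc]
    _ = mulCompound k (NormedSpace.exp (t • A)) := by rw [hBB, one_mul]

end AJL

/-- `exp(A^{[k]} t) = (exp(At))^{(k)}` for any constant `A ∈ ℝ^{n×n}`,
`k ∈ [1,n]` and `t ∈ ℝ`. -/
theorem exp_addCompound {n : ℕ} (k : ℕ) (hk : 1 ≤ k) (hkn : k ≤ n)
    (A : Matrix (Fin n) (Fin n) ℝ) (t : ℝ) :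
    NormedSpace.exp (t • addCompound k A) = mulCompound k (NormedSpace.exp (t • A)) :=
  AJL.main k A t

end
end

section
/- Let A ∈ ℝ^{n×n} and k ∈ [1,n]. Let λ_1(S) ≥ λ_2(S) ≥ ⋯ ≥ λ_n(S) denote the eigenvalues of the symmetric matrix S := (A + A^T)/2 in decreasing order. Then the largest eigenvalue of the symmetric matrix (A^{[k]} + (A^{[k]})^T)/2 equals Σ_{i=1}^k λ_i(S); equivalently, the matrix measure μ_2 induced by the Euclidean norm satisfies μ_2(A^{[k]}) = Σ_{i=1}^k λ_i((A + A^T)/2). -/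
open Matrix Set Filter
open scoped ENNReal

noncomputable section

section AuxCompound
open Equiv
/-- the increasing enumeration of a k-subset -/
def emb {n k : ℕ} (κ : IdxK n k) : Fin k → Fin n := fun i => (κ.1.orderIsoOfFin κ.2 i).1

lemma emb_mem {n k : ℕ} (κ : IdxK n k) (i : Fin k) : emb κ i ∈ κ.1 :=
  (κ.1.orderIsoOfFin κ.2 i).2

lemma emb_strictMono {n k : ℕ} (κ : IdxK n k) : StrictMono (emb κ) :=
  fun _ _ h => (κ.1.orderIsoOfFin κ.2).strictMono h

lemma emb_injective {n k : ℕ} (κ : IdxK n k) : Function.Injective (emb κ) :=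
  (emb_strictMono κ).injective

lemma emb_surj {n k : ℕ} (κ : IdxK n k) {a : Fin n} (ha : a ∈ κ.1) : ∃ i, emb κ i = a :=
  ⟨(κ.1.orderIsoOfFin κ.2).symm ⟨a, ha⟩, congrArg Subtype.val
    ((κ.1.orderIsoOfFin κ.2).apply_symm_apply ⟨a, ha⟩)⟩

lemma mulCompound_apply {n m k : ℕ} (A : Matrix (Fin n) (Fin m) ℝ) (κ : IdxK n k)
    (lam : IdxK m k) : mulCompound k A κ lam = (A.submatrix (emb κ) (emb lam)).det := rfl

lemma mulCompound_transpose {n m k : ℕ} (A : Matrix (Fin n) (Fin m) ℝ) :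
    mulCompound k Aᵀ = (mulCompound k A)ᵀ := by
  ext κ lam
  rw [transpose_apply, mulCompound_apply, mulCompound_apply, ← Matrix.det_transpose]
  congr 1

/-- compound of a diagonal matrix is diagonal -/
lemma mulCompound_diagonal {n k : ℕ} (d : Fin n → ℝ) :
    mulCompound k (diagonal d) = diagonal (fun κ : IdxK n k => ∏ a ∈ κ.1, d a) := by
  ext κ lam
  by_cases h : κ = lam
  · subst h
    rw [mulCompound_apply, diagonal_apply_eq]
    have : (diagonal d).submatrix (emb κ) (emb κ) = diagonal (fun i => d (emb κ i)) := by
      ext i j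
      by_cases hij : i = j
      · subst hij; simp [Matrix.diagonal_apply_eq, Matrix.submatrix_apply]
      · rw [Matrix.submatrix_apply, Matrix.diagonal_apply_ne _ (fun h => hij (emb_injective κ h)),
          Matrix.diagonal_apply_ne _ hij]
    rw [this, det_diagonal]
    exact Finset.prod_bij (fun i _ => emb κ i) (fun i _ => emb_mem κ i)
      (fun i _ j _ h => emb_injective κ h)
      (fun a ha => ⟨(κ.1.orderIsoOfFin κ.2).symm ⟨a, ha⟩, Finset.mem_univ _,
        congrArg Subtype.val ((κ.1.orderIsoOfFin κ.2).apply_symm_apply ⟨a, ha⟩)⟩)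
      (fun i _ => rfl)
  · rw [mulCompound_apply, diagonal_apply_ne _ h]
    -- there is an element of κ not in lam
    have hcard : ¬ κ.1 ⊆ lam.1 := by
      intro hsub
      exact h (Subtype.ext (Finset.eq_of_subset_of_card_le hsub (by rw [κ.2, lam.2])))
    obtain ⟨a, haK, haL⟩ := Finset.not_subset.mp hcard
    obtain ⟨i₀, hi₀⟩ := emb_surj κ haK
    apply det_eq_zero_of_row_eq_zero i₀
    intro j
    rw [Matrix.submatrix_apply, hi₀, diagonal_apply_ne]
    intro hh; exact haL (hh ▸ emb_mem lam j)

lemma det_mul_rect {k n : ℕ} (F : Matrix (Fin k) (Fin n) ℝ) (G : Matrix (Fin n) (Fin k) ℝ) :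
    (F * G).det = ∑ μ : IdxK n k, (F.submatrix id (emb μ)).det * (G.submatrix (emb μ) id).det := by
  classical
  have step1 : (F * G).det
      = ∑ p : Fin k → Fin n, (∏ i, G (p i) i) * (F.submatrix id p).det := by
    have : (F * G).det = ∑ p : Fin k → Fin n, ∑ σ : Perm (Fin k),
        (Perm.sign σ : ℝ) * ∏ i, F (σ i) (p i) * G (p i) i := by
      simp only [det_apply', mul_apply, Finset.prod_univ_sum, Finset.mul_sum,
        Fintype.piFinset_univ]
      rw [Finset.sum_comm]
    rw [this]
    refine Finset.sum_congr rfl fun p _ => ?_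
    rw [det_apply', Finset.mul_sum]
    refine Finset.sum_congr rfl fun σ _ => ?_
    simp only [Finset.prod_mul_distrib, Matrix.submatrix_apply, id_eq]
    ring
  have step2 : ∑ p : Fin k → Fin n, (∏ i, G (p i) i) * (F.submatrix id p).det
      = ∑ p ∈ Finset.univ.filter (fun p : Fin k → Fin n => Function.Injective p),
          (∏ i, G (p i) i) * (F.submatrix id p).det := by
    refine (Finset.sum_subset (Finset.filter_subset _ _) fun p _ hp => ?_).symm
    have hpinj : ¬ Function.Injective p := by simpa using hp
    rw [Function.Injective] at hpinj
    push_neg at hpinj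
    obtain ⟨i, j, hpij, hij⟩ := hpinj
    rw [Matrix.det_zero_of_column_eq hij (fun a => by simp [hpij]), mul_zero]
  rw [step1, step2]
  -- reindex injective maps by (subset, permutation)
  have step3 := Finset.sum_bij
    (s := (Finset.univ : Finset (IdxK n k × Perm (Fin k))))
    (t := Finset.univ.filter (fun p : Fin k → Fin n => Function.Injective p))
    (f := fun x => (∏ i, G (emb x.1 (x.2 i)) i) * (F.submatrix id (emb x.1 ∘ x.2)).det)
    (g := fun p => (∏ i, G (p i) i) * (F.submatrix id p).det)
    (i := fun x _ => emb x.1 ∘ x.2)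
    (hi := fun x _ => by
      simp only [Finset.mem_filter, Finset.mem_univ, true_and]
      exact (emb_injective x.1).comp x.2.injective)
    (i_inj := by
      rintro ⟨μ, τ⟩ _ ⟨μ', τ'⟩ _ h
      have himg : μ.1 = μ'.1 := by
        ext a
        constructor
        · intro ha
          obtain ⟨i, hi⟩ := emb_surj μ ha
          have := congrFun h (τ.symm i)
          simp only [Function.comp_apply, Equiv.apply_symm_apply] at this
          rw [hi] at this
          exact this ▸ emb_mem μ' _
        · intro ha
          obtain ⟨i, hi⟩ := emb_surj μ' ha
          have := congrFun h.symm (τ'.symm i)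
          simp only [Function.comp_apply, Equiv.apply_symm_apply] at this
          rw [hi] at this
          exact this ▸ emb_mem μ _
      have hμ : μ = μ' := Subtype.ext himg
      subst hμ
      refine Prod.ext rfl ?_
      ext i
      exact congrArg Fin.val (emb_injective μ (congrFun h i))
    )
    (i_surj := by
      intro p hp
      have hpinj : Function.Injective p := by simpa using hp
      have hcard : (Finset.univ.image p).card = k := by
        rw [Finset.card_image_of_injective _ hpinj, Finset.card_univ, Fintype.card_fin]
      set μ : IdxK n k := ⟨Finset.univ.image p, hcard⟩ with hμ
      have hmem : ∀ i, p i ∈ μ.1 := fun i => Finset.mem_image_of_mem p (Finset.mem_univ i)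
      have hqinj : Function.Injective (fun i => (μ.1.orderIsoOfFin μ.2).symm ⟨p i, hmem i⟩) := by
        intro i j hij
        apply hpinj
        have h2 := (μ.1.orderIsoOfFin μ.2).symm.injective hij
        exact congrArg Subtype.val h2
      have hqbij := (Finite.injective_iff_bijective).mp hqinj
      refine ⟨⟨μ, Equiv.ofBijective _ hqbij⟩, Finset.mem_univ _, ?_⟩
      funext i
      show emb μ ((μ.1.orderIsoOfFin μ.2).symm ⟨p i, hmem i⟩) = p i
      unfold emb
      exact congrArg Subtype.val ((μ.1.orderIsoOfFin μ.2).apply_symm_apply ⟨p i, hmem i⟩)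
    )
    (h := fun x _ => rfl)
  rw [← step3, Fintype.sum_prod_type]
  refine Finset.sum_congr rfl fun μ _ => ?_
  -- inner sum over permutations
  have hdet : ∀ τ : Perm (Fin k), (F.submatrix id (emb μ ∘ τ)).det
      = (Perm.sign τ : ℝ) * (F.submatrix id (emb μ)).det := by
    intro τ
    have : F.submatrix id (emb μ ∘ τ) = (F.submatrix id (emb μ)).submatrix id τ := rfl
    rw [this, Matrix.det_permute']
  have : ∀ τ : Perm (Fin k), (∏ i, G (emb μ (τ i)) i) * (F.submatrix id (emb μ ∘ τ)).det
      = (F.submatrix id (emb μ)).det * ((Perm.sign τ : ℝ) * ∏ i, (G.submatrix (emb μ) id) (τ i) i) := by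
    intro τ
    rw [hdet τ]
    simp only [Matrix.submatrix_apply, id_eq]
    ring
  rw [Finset.sum_congr rfl (fun τ _ => this τ), ← Finset.mul_sum, ← det_apply']


/-- directional derivative of det at `P` in direction `M` -/
noncomputable def ddet {k : ℕ} (P M : Matrix (Fin k) (Fin k) ℝ) : ℝ :=
  ∑ j, (P.updateCol j (fun i => M i j)).det

lemma hasDerivAt_det {k : ℕ} (P M : Matrix (Fin k) (Fin k) ℝ) :
    HasDerivAt (fun ε : ℝ => (P + ε • M).det) (ddet P M) 0 := by
  have hfun : (fun ε : ℝ => (P + ε • M).det)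
      = fun ε : ℝ => ∑ σ : Perm (Fin k), (Perm.sign σ : ℝ) *
          ∏ i, (P (σ i) i + ε * M (σ i) i) := by
    funext ε
    rw [det_apply']
    refine Finset.sum_congr rfl fun σ _ => ?_
    congr 1
  rw [hfun]
  have hterm : ∀ σ : Perm (Fin k), HasDerivAt
      (fun ε : ℝ => (Perm.sign σ : ℝ) * ∏ i, (P (σ i) i + ε * M (σ i) i))
      ((Perm.sign σ : ℝ) * ∑ j, (∏ i ∈ Finset.univ.erase j,
          (P (σ i) i + 0 * M (σ i) i)) • M (σ j) j) 0 := by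
    intro σ
    refine HasDerivAt.const_mul _ ?_
    exact HasDerivAt.fun_finsetProd fun i _ =>
      ((hasDerivAt_mul_const (M (σ i) i)).const_add (P (σ i) i))
  have hD := HasDerivAt.fun_sum (fun σ (_ : σ ∈ (Finset.univ : Finset (Perm (Fin k)))) => hterm σ)
  have hval : ∑ σ : Perm (Fin k), (Perm.sign σ : ℝ) * ∑ j, (∏ i ∈ Finset.univ.erase j,
      (P (σ i) i + 0 * M (σ i) i)) • M (σ j) j = ddet P M := by
    unfold ddet
    simp only [zero_mul, add_zero, smul_eq_mul, Finset.mul_sum]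
    rw [Finset.sum_comm]
    refine Finset.sum_congr rfl fun j _ => ?_
    rw [det_apply']
    refine Finset.sum_congr rfl fun σ _ => ?_
    rw [← Finset.mul_prod_erase Finset.univ _ (Finset.mem_univ j)]
    have h1 : (P.updateCol j (fun i => M i j)) (σ j) j = M (σ j) j := by
      simp [Matrix.updateCol_apply]
    have h2 : ∏ i ∈ Finset.univ.erase j, (P.updateCol j fun i => M i j) (σ i) i
        = ∏ i ∈ Finset.univ.erase j, P (σ i) i := by
      refine Finset.prod_congr rfl fun i hi => ?_
      rw [Matrix.updateCol_apply, if_neg (Finset.ne_of_mem_erase hi)]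
    rw [h1, h2]; ring
  exact hval ▸ hD

lemma hasDerivAt_mulCompound {n k : ℕ} (A : Matrix (Fin n) (Fin n) ℝ) (κ lam : IdxK n k) :
    HasDerivAt (fun ε : ℝ => mulCompound k ((1 : Matrix (Fin n) (Fin n) ℝ) + ε • A) κ lam)
      (ddet ((1 : Matrix (Fin n) (Fin n) ℝ).submatrix (emb κ) (emb lam))
        (A.submatrix (emb κ) (emb lam))) 0 := by
  have hfun : (fun ε : ℝ => mulCompound k ((1 : Matrix (Fin n) (Fin n) ℝ) + ε • A) κ lam)
      = fun ε : ℝ => (((1 : Matrix (Fin n) (Fin n) ℝ).submatrix (emb κ) (emb lam))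
          + ε • (A.submatrix (emb κ) (emb lam))).det := by
    funext ε
    rw [mulCompound_apply]
    congr 1
  rw [hfun]
  exact hasDerivAt_det _ _

lemma addCompound_eq_ddet {n k : ℕ} (A : Matrix (Fin n) (Fin n) ℝ) (κ lam : IdxK n k) :
    addCompound k A κ lam = ddet ((1 : Matrix (Fin n) (Fin n) ℝ).submatrix (emb κ) (emb lam))
      (A.submatrix (emb κ) (emb lam)) :=
  (hasDerivAt_mulCompound A κ lam).deriv

lemma ddet_add {k : ℕ} (P M N : Matrix (Fin k) (Fin k) ℝ) :
    ddet P (M + N) = ddet P M + ddet P N := by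
  unfold ddet
  rw [← Finset.sum_add_distrib]
  refine Finset.sum_congr rfl fun j _ => ?_
  have : (fun i => (M + N) i j) = (fun i => M i j) + fun i => N i j := by
    funext i; simp [Matrix.add_apply]
  rw [this, Matrix.det_updateCol_add]

lemma ddet_smul {k : ℕ} (P M : Matrix (Fin k) (Fin k) ℝ) (a : ℝ) :
    ddet P (a • M) = a * ddet P M := by
  unfold ddet
  rw [Finset.mul_sum]
  refine Finset.sum_congr rfl fun j _ => ?_
  have : (fun i => (a • M) i j) = a • fun i => M i j := by
    funext i; simp [Matrix.smul_apply]
  rw [this, Matrix.det_updateCol_smul]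

lemma addCompound_add {n k : ℕ} (A B : Matrix (Fin n) (Fin n) ℝ) :
    addCompound k (A + B) = addCompound k A + addCompound k B := by
  ext κ lam
  simp only [Matrix.add_apply, addCompound_eq_ddet, Matrix.submatrix_add, Pi.add_apply]
  exact ddet_add _ _ _

lemma addCompound_smul {n k : ℕ} (a : ℝ) (A : Matrix (Fin n) (Fin n) ℝ) :
    addCompound k (a • A) = a • addCompound k A := by
  ext κ lam
  simp only [Matrix.smul_apply, addCompound_eq_ddet, Matrix.submatrix_smul, Pi.smul_apply,
    smul_eq_mul]
  exact ddet_smul _ _ _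

lemma addCompound_transpose {n k : ℕ} (A : Matrix (Fin n) (Fin n) ℝ) :
    addCompound k Aᵀ = (addCompound k A)ᵀ := by
  ext κ lam
  rw [transpose_apply]
  unfold addCompound
  congr 1
  funext ε
  have h1 : (1 : Matrix (Fin n) (Fin n) ℝ) + ε • Aᵀ = ((1 : Matrix (Fin n) (Fin n) ℝ) + ε • A)ᵀ := by
    rw [transpose_add, transpose_smul, transpose_one]
  rw [h1, mulCompound_transpose, transpose_apply]
/-- Cauchy–Binet for compounds. -/
lemma mulCompound_mul {n k : ℕ} (X Y : Matrix (Fin n) (Fin n) ℝ) :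
    mulCompound k (X * Y) = mulCompound k X * mulCompound k Y := by
  ext κ lam
  rw [mulCompound_apply, Matrix.mul_apply]
  have : (X * Y).submatrix (emb κ) (emb lam)
      = (X.submatrix (emb κ) id) * (Y.submatrix id (emb lam)) := by
    ext i j; simp [Matrix.mul_apply]
  rw [this, det_mul_rect]
  refine Finset.sum_congr rfl fun μ _ => ?_
  rw [mulCompound_apply, mulCompound_apply]
  congr 1

lemma mulCompound_one {n k : ℕ} :
    mulCompound k (1 : Matrix (Fin n) (Fin n) ℝ) = 1 := by
  have h1 : (1 : Matrix (Fin n) (Fin n) ℝ) = Matrix.diagonal (fun _ => 1) := by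
    ext i j
    by_cases h : i = j
    · subst h; simp [Matrix.one_apply_eq]
    · simp [Matrix.one_apply_ne h, Matrix.diagonal_apply_ne _ h]
  rw [h1, mulCompound_diagonal]
  ext κ lam
  by_cases h : κ = lam
  · subst h; simp [Matrix.one_apply_eq]
  · simp [Matrix.one_apply_ne h, Matrix.diagonal_apply_ne _ h]

lemma orth_compound {n k : ℕ} {U : Matrix (Fin n) (Fin n) ℝ} (hU : U * Uᵀ = 1) :
    mulCompound k U * (mulCompound k U)ᵀ = 1 := by
  rw [← mulCompound_transpose, ← mulCompound_mul, hU, mulCompound_one]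

/-- additive compound of an orthogonally diagonalizable matrix -/
lemma addCompound_conj {n k : ℕ} (U : Matrix (Fin n) (Fin n) ℝ) (d : Fin n → ℝ)
    (hU : U * Uᵀ = 1) :
    addCompound k (U * diagonal d * Uᵀ)
      = mulCompound k U * diagonal (fun μ : IdxK n k => ∑ i ∈ μ.1, d i)
          * (mulCompound k U)ᵀ := by
  set V := mulCompound (n := n) k U with hV
  have hmc : ∀ ε : ℝ, mulCompound k (1 + ε • (U * diagonal d * Uᵀ))
      = V * diagonal (fun μ : IdxK n k => ∏ i ∈ μ.1, (1 + ε * d i)) * Vᵀ := by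
    intro ε
    have h2 : diagonal (fun i : Fin n => 1 + ε * d i) = 1 + ε • diagonal d := by
      ext i j
      by_cases h : i = j
      · subst h; simp [Matrix.one_apply]
      · simp [Matrix.diagonal_apply_ne _ h, Matrix.one_apply_ne h]
    have h1 : (1 : Matrix (Fin n) (Fin n) ℝ) + ε • (U * diagonal d * Uᵀ)
        = U * diagonal (fun i : Fin n => 1 + ε * d i) * Uᵀ := by
      rw [h2, Matrix.mul_add, Matrix.mul_one, Matrix.add_mul, hU, Matrix.mul_smul,
        Matrix.smul_mul]
    rw [h1, mulCompound_mul, mulCompound_mul, mulCompound_diagonal, mulCompound_transpose, hV]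
  have hentry : ∀ (g : IdxK n k → ℝ) (κ lam : IdxK n k),
      (V * diagonal g * Vᵀ) κ lam = ∑ μ : IdxK n k, V κ μ * (g μ * V lam μ) := by
    intro g κ lam
    rw [Matrix.mul_assoc, Matrix.mul_apply]
    refine Finset.sum_congr rfl fun μ _ => ?_
    rw [Matrix.diagonal_mul, Matrix.transpose_apply]
  ext κ lam
  show deriv (fun ε : ℝ => mulCompound k (1 + ε • (U * diagonal d * Uᵀ)) κ lam) 0 = _
  have hfun : (fun ε : ℝ => mulCompound k (1 + ε • (U * diagonal d * Uᵀ)) κ lam)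
      = fun ε : ℝ => ∑ μ : IdxK n k, V κ μ * ((∏ i ∈ μ.1, (1 + ε * d i)) * V lam μ) := by
    funext ε
    rw [hmc ε, hentry]
  rw [hfun, hentry]
  have hDA : HasDerivAt
      (fun ε : ℝ => ∑ μ : IdxK n k, V κ μ * ((∏ i ∈ μ.1, (1 + ε * d i)) * V lam μ))
      (∑ μ : IdxK n k, V κ μ * ((∑ i ∈ μ.1, (∏ a ∈ μ.1.erase i, (1 + 0 * d a)) • d i) * V lam μ))
      0 := by
    refine HasDerivAt.fun_sum fun μ _ => ?_
    refine HasDerivAt.const_mul _ ?_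
    refine HasDerivAt.mul_const ?_ _
    exact HasDerivAt.fun_finsetProd fun i _ =>
      ((hasDerivAt_mul_const (d i)).const_add 1)
  rw [hDA.deriv]
  refine Finset.sum_congr rfl fun μ _ => ?_
  congr 2
  refine Finset.sum_congr rfl fun i _ => ?_
  simp

/-- determinant of `x•1 - K` for orthogonally diagonalized `K` -/
lemma det_sub_conj {m : Type*} [Fintype m] [DecidableEq m] (V K : Matrix m m ℝ)
    (hV : V * Vᵀ = 1) (g : m → ℝ) (hK : K = V * diagonal g * Vᵀ) (x : ℝ) :
    (x • (1 : Matrix m m ℝ) - K).det = ∏ i, (x - g i) := by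
  have h1 : x • (1 : Matrix m m ℝ) - K = V * diagonal (fun i => x - g i) * Vᵀ := by
    have h2 : diagonal (fun i => x - g i) = x • (1 : Matrix m m ℝ) - diagonal g := by
      ext i j
      by_cases h : i = j
      · subst h; simp [Matrix.one_apply]
      · simp [Matrix.diagonal_apply_ne _ h, Matrix.one_apply_ne h]
    rw [hK, h2, Matrix.mul_sub, Matrix.sub_mul, Matrix.mul_smul, Matrix.mul_one,
      Matrix.smul_mul, hV]
  rw [h1, Matrix.det_mul, Matrix.det_mul]
  have : V.det * (diagonal fun i => x - g i).det * Vᵀ.det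
      = (V.det * Vᵀ.det) * (diagonal fun i => x - g i).det := by ring
  rw [this, ← Matrix.det_mul, hV, Matrix.det_one, one_mul, Matrix.det_diagonal]
lemma le_emb {n k : ℕ} (κ : IdxK n k) (i : Fin k) : (i : ℕ) ≤ (emb κ i : ℕ) := by
  have key : ∀ m : ℕ, ∀ h : m < k, m ≤ (emb κ ⟨m, h⟩ : ℕ) := by
    intro m
    induction m with
    | zero => intro h; exact Nat.zero_le _
    | succ m ih =>
      intro h
      have hlt : (⟨m, Nat.lt_of_succ_lt h⟩ : Fin k) < ⟨m + 1, h⟩ := by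
        simp [Fin.lt_def]
      have h2 : (emb κ ⟨m, Nat.lt_of_succ_lt h⟩ : ℕ) < (emb κ ⟨m + 1, h⟩ : ℕ) :=
        emb_strictMono κ hlt
      have h3 := ih (Nat.lt_of_succ_lt h)
      omega
  have := key i.1 i.2
  simpa using this

/-- sum over a `k`-subset via its enumeration -/
lemma sum_eq_sum_emb {n k : ℕ} (κ : IdxK n k) (g : Fin n → ℝ) :
    ∑ a ∈ κ.1, g a = ∑ i : Fin k, g (emb κ i) := by
  refine (Finset.sum_bij (fun i _ => emb κ i) (fun i _ => emb_mem κ i)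
    (fun i _ j _ h => emb_injective κ h)
    (fun a ha => by obtain ⟨i, hi⟩ := emb_surj κ ha; exact ⟨i, Finset.mem_univ _, hi⟩)
    (fun i _ => rfl)).symm

section topk
variable {n k : ℕ}

lemma s0_eq (hkn : k ≤ n) : Finset.univ.filter (fun i : Fin n => (i : ℕ) < k)
    = Finset.map (Fin.castLEEmb hkn) Finset.univ := by
  ext a
  simp only [Finset.mem_filter, Finset.mem_univ, true_and, Finset.mem_map]
  constructor
  · intro h
    exact ⟨⟨a.1, h⟩, Fin.ext rfl⟩
  · rintro ⟨i, rfl⟩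
    simpa using i.2

lemma s0_card (hkn : k ≤ n) : (Finset.univ.filter (fun i : Fin n => (i : ℕ) < k)).card = k := by
  rw [s0_eq hkn, Finset.card_map, Finset.card_univ, Fintype.card_fin]

lemma sum_le_topk (hkn : k ≤ n) (lam : Fin n → ℝ) (hmono : Antitone lam) (s : Finset (Fin n))
    (hs : s.card = k) :
    ∑ a ∈ s, lam a ≤ ∑ a ∈ Finset.univ.filter (fun i : Fin n => (i : ℕ) < k), lam a := by
  have h1 : ∑ a ∈ s, lam a = ∑ i : Fin k, lam (emb ⟨s, hs⟩ i) := sum_eq_sum_emb ⟨s, hs⟩ lam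
  have h2 : ∑ a ∈ Finset.univ.filter (fun i : Fin n => (i : ℕ) < k), lam a
      = ∑ i : Fin k, lam (Fin.castLE hkn i) := by
    rw [s0_eq hkn, Finset.sum_map]
    rfl
  rw [h1, h2]
  refine Finset.sum_le_sum fun i _ => ?_
  refine hmono ?_
  rw [Fin.le_def]
  simpa using le_emb ⟨s, hs⟩ i
end topk
end AuxCompound

/-- if `λ_1 ≥ ⋯ ≥ λ_n` are the eigenvalues of `S = (A + Aᵀ)/2`
(in decreasing order), then the largest eigenvalue of `(A^{[k]} + (A^{[k]})ᵀ)/2`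
equals `Σ_{i=1}^k λ_i`; i.e. `μ₂(A^{[k]}) = Σ_{i=1}^k λ_i((A+Aᵀ)/2)`. -/
theorem mu2_addCompound {n : ℕ} (k : ℕ) (hk : 1 ≤ k) (hkn : k ≤ n)
    (A : Matrix (Fin n) (Fin n) ℝ)
    (S : Matrix (Fin n) (Fin n) ℝ) (hS : S = (2⁻¹ : ℝ) • (A + Aᵀ))
    (hSh : S.IsHermitian)
    (Tm : Matrix (IdxK n k) (IdxK n k) ℝ)
    (hT : Tm = (2⁻¹ : ℝ) • (addCompound k A + (addCompound k A)ᵀ))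
    (hTh : Tm.IsHermitian)
    (lam : Fin n → ℝ) (hmono : Antitone lam)
    (e : Fin n ≃ Fin n) (he : ∀ i, lam (e i) = hSh.eigenvalues i) :
    IsGreatest (Set.range hTh.eigenvalues)
      (∑ i ∈ Finset.univ.filter (fun i : Fin n => (i : ℕ) < k), lam i) := by
  classical
  set d : Fin n → ℝ := hSh.eigenvalues with hd
  set U : Matrix (Fin n) (Fin n) ℝ := ↑hSh.eigenvectorUnitary with hUdef
  have hstarU : star U = Uᵀ := by
    rw [Matrix.star_eq_conjTranspose, Matrix.conjTranspose_eq_transpose_of_trivial]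
  have hU : U * Uᵀ = 1 := by
    have h2 := hSh.eigenvectorUnitary.2
    rw [Matrix.mem_unitaryGroup_iff] at h2
    rwa [← hstarU]
  have hofd : (RCLike.ofReal ∘ d : Fin n → ℝ) = d := funext fun i => by simp
  have hSdecomp : S = U * diagonal d * Uᵀ := by
    rw [← hofd, ← hstarU]
    exact hSh.spectral_theorem
  have hTS : Tm = addCompound k S := by
    rw [hT, ← addCompound_transpose, ← addCompound_add, ← addCompound_smul, ← hS]
  set f : IdxK n k → ℝ := fun μ => ∑ i ∈ μ.1, d i with hf
  have hTdecomp : Tm = mulCompound k U * diagonal f * (mulCompound k U)ᵀ := by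
    rw [hTS, hSdecomp, addCompound_conj U d hU]
  -- spectral decomposition of Tm itself
  set W : Matrix (IdxK n k) (IdxK n k) ℝ := ↑hTh.eigenvectorUnitary with hWdef
  have hstarW : star W = Wᵀ := by
    rw [Matrix.star_eq_conjTranspose, Matrix.conjTranspose_eq_transpose_of_trivial]
  have hW : W * Wᵀ = 1 := by
    have h2 := hTh.eigenvectorUnitary.2
    rw [Matrix.mem_unitaryGroup_iff] at h2
    rwa [← hstarW]
  have hofe : (RCLike.ofReal ∘ hTh.eigenvalues : IdxK n k → ℝ) = hTh.eigenvalues :=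
    funext fun i => by simp
  have hTdecomp2 : Tm = W * diagonal hTh.eigenvalues * Wᵀ := by
    rw [← hofe, ← hstarW]
    exact hTh.spectral_theorem
  have hprod : ∀ x : ℝ, ∏ μ : IdxK n k, (x - hTh.eigenvalues μ)
      = ∏ μ : IdxK n k, (x - f μ) := fun x => by
    rw [← det_sub_conj W Tm hW _ hTdecomp2 x,
      ← det_sub_conj (mulCompound k U) Tm (orth_compound hU) f hTdecomp x]
  have hrange : Set.range hTh.eigenvalues = Set.range f := by
    ext t
    simp only [Set.mem_range]
    constructor
    · rintro ⟨μ, rfl⟩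
      have h0 : ∏ μ' : IdxK n k, (hTh.eigenvalues μ - f μ') = 0 := by
        rw [← hprod]
        exact Finset.prod_eq_zero (Finset.mem_univ μ) (sub_self _)
      obtain ⟨μ', _, h⟩ := Finset.prod_eq_zero_iff.mp h0
      exact ⟨μ', by linarith⟩
    · rintro ⟨μ, rfl⟩
      have h0 : ∏ μ' : IdxK n k, (f μ - hTh.eigenvalues μ') = 0 := by
        rw [hprod]
        exact Finset.prod_eq_zero (Finset.mem_univ μ) (sub_self _)
      obtain ⟨μ', _, h⟩ := Finset.prod_eq_zero_iff.mp h0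
      exact ⟨μ', by linarith⟩
  rw [hrange]
  have hdl : ∀ i, d i = lam (e i) := fun i => (he i).symm
  have hfval : ∀ μ : IdxK n k, f μ = ∑ a ∈ μ.1.image e, lam a := by
    intro μ
    rw [Finset.sum_image (fun x _ y _ h => e.injective h)]
    exact Finset.sum_congr rfl fun i _ => by rw [hdl i]
  constructor
  · -- membership
    set s0 := Finset.univ.filter (fun i : Fin n => (i : ℕ) < k) with hs0
    have hcard0 : s0.card = k := s0_card hkn
    refine ⟨⟨s0.image ⇑e.symm, by
      rw [Finset.card_image_of_injective _ e.symm.injective, hcard0]⟩, ?_⟩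
    rw [hfval]
    show ∑ a ∈ (s0.image ⇑e.symm).image ⇑e, lam a = _
    rw [Finset.image_image]
    have : (⇑e ∘ ⇑e.symm) = id := funext fun a => e.apply_symm_apply a
    rw [this, Finset.image_id]
  · rintro t ⟨μ, rfl⟩
    rw [hfval]
    exact sum_le_topk hkn lam hmono (μ.1.image e)
      (by rw [Finset.card_image_of_injective _ e.injective, μ.2])

end
end

section
/- Let D : ℝ_+ → ℝ^{n×n} be continuous with D(t) diagonal for every t, and suppose there exist k ∈ [1,n] and η > 0 such that for every t ≥ 0, the sum of every k diagonal entries of D(t) is ≤ −η. Then the LTV system ẋ(t) = D(t)x(t) is k-order contractive with respect to the L_s norm for every s ∈ {1, 2, ∞}: for any a^1, …, a^k ∈ ℝ^n and all t ≥ 0, | x(t,a^1) ∧ ⋯ ∧ x(t,a^k) |_s ≤ e^{−ηt} | a^1 ∧ ⋯ ∧ a^k |_s, where x(t,a) is the solution with x(0) = a. -/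
open Matrix Set Filter
open scoped ENNReal

noncomputable section

/-- scalar decay lemma -/
lemma scalar_decay (η : ℝ) (y c : ℝ → ℝ)
    (hy : ∀ t ∈ Set.Ici (0:ℝ), HasDerivWithinAt y (c t * y t) (Set.Ici 0) t)
    (hc : ∀ t ∈ Set.Ici (0:ℝ), c t ≤ -η) :
    ∀ t ∈ Set.Ici (0:ℝ), |y t| ≤ Real.exp (-η * t) * |y 0| := by
  intro t ht
  set h : ℝ → ℝ := fun t => (y t)^2 * Real.exp (2*η*t) with hh
  have hmono : AntitoneOn h (Set.Ici 0) := by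
    apply antitoneOn_of_hasDerivWithinAt_nonpos (convex_Ici 0)
      (f' := fun t => (2*(c t) + 2*η) * ((y t)^2 * Real.exp (2*η*t)))
    · have hcy : ContinuousOn y (Set.Ici 0) := fun t ht => (hy t ht).continuousWithinAt
      exact (hcy.pow 2).mul
        (Real.continuous_exp.comp (continuous_const.mul continuous_id)).continuousOn
    · intro u hu
      rw [interior_Ici] at hu ⊢
      have hu' : u ∈ Set.Ici (0:ℝ) := Set.mem_Ici.2 (le_of_lt (Set.mem_Ioi.1 hu))
      have hyd : HasDerivAt y (c u * y u) u :=
        (hy u hu').hasDerivAt (Ici_mem_nhds hu)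
      have h1 : HasDerivAt (fun t => (y t)^2) (2 * y u * (c u * y u)) u := by
        simpa using hyd.fun_pow 2
      have h2 : HasDerivAt (fun t => Real.exp (2*η*t)) (Real.exp (2*η*u) * (2*η)) u := by
        simpa using ((hasDerivAt_id u).const_mul (2*η)).exp
      have h3 := (h1.mul h2).hasDerivWithinAt (s := Set.Ioi 0)
      refine h3.congr_deriv (Eq.symm ?_)
      ring
    · intro u hu
      rw [interior_Ici] at hu
      have hcu := hc u (Set.mem_Ici.2 (le_of_lt (Set.mem_Ioi.1 hu)))
      have h1 : 2 * c u + 2*η ≤ 0 := by linarith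
      have h2 : (0:ℝ) ≤ (y u)^2 * Real.exp (2*η*u) := by positivity
      exact mul_nonpos_of_nonpos_of_nonneg h1 h2
  have hle : h t ≤ h 0 := hmono (self_mem_Ici) ht ht
  have h0 : h 0 = (y 0)^2 := by simp [hh]
  have hsq : (y t)^2 ≤ Real.exp (-η*t)^2 * (y 0)^2 := by
    have hexp : Real.exp (2*η*t) > 0 := Real.exp_pos _
    rw [h0, hh] at hle
    have : Real.exp (-η*t)^2 = (Real.exp (2*η*t))⁻¹ := by
      rw [← Real.exp_nat_mul, ← Real.exp_neg]; ring_nf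
    rw [this]
    rw [← le_div_iff₀ hexp] at hle
    calc y t ^ 2 ≤ y 0 ^ 2 / Real.exp (2*η*t) := hle
      _ = (Real.exp (2*η*t))⁻¹ * y 0 ^ 2 := by ring
  calc |y t| = Real.sqrt ((y t)^2) := (Real.sqrt_sq_eq_abs _).symm
    _ ≤ Real.sqrt (Real.exp (-η*t)^2 * (y 0)^2) := Real.sqrt_le_sqrt hsq
    _ = Real.exp (-η*t) * |y 0| := by
        rw [Real.sqrt_mul (sq_nonneg _), Real.sqrt_sq_eq_abs, Real.sqrt_sq_eq_abs,
          abs_of_pos (Real.exp_pos _)]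

lemma lpnorm_mono_top {ι : Type*} [Fintype ι] (r : ℝ) (hr : 0 ≤ r) (u v : ι → ℝ)
    (h : ∀ i, |u i| ≤ r * |v i|) : lpnorm ⊤ u ≤ r * lpnorm ⊤ v := by
  simp only [lpnorm, if_pos]
  rcases isEmpty_or_nonempty ι with hι | hι
  · simp [Real.iSup_of_isEmpty]
  · apply ciSup_le
    intro i
    refine (h i).trans (mul_le_mul_of_nonneg_left ?_ hr)
    exact le_ciSup (f := fun i => |v i|) (Set.Finite.bddAbove (Set.finite_range _)) i

lemma lpnorm_mono_fin {ι : Type*} [Fintype ι] (p : ℝ≥0∞) (hp : p ≠ ⊤) (hq : 0 < p.toReal)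
    (r : ℝ) (hr : 0 ≤ r) (u v : ι → ℝ)
    (h : ∀ i, |u i| ≤ r * |v i|) : lpnorm p u ≤ r * lpnorm p v := by
  simp only [lpnorm, if_neg hp]
  set q := p.toReal
  calc (∑ i, |u i| ^ q) ^ (1/q)
      ≤ (∑ i, (r * |v i|) ^ q) ^ (1/q) := by
        apply Real.rpow_le_rpow (by positivity)
          (Finset.sum_le_sum fun i _ => Real.rpow_le_rpow (abs_nonneg _) (h i) hq.le)
          (by positivity)
    _ = (r ^ q * ∑ i, |v i| ^ q) ^ (1/q) := by
        rw [Finset.mul_sum]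
        congr 1
        exact Finset.sum_congr rfl fun i _ => Real.mul_rpow hr (abs_nonneg _)
    _ = r * (∑ i, |v i| ^ q) ^ (1/q) := by
        rw [Real.mul_rpow (by positivity) (by positivity), ← Real.rpow_mul hr,
          mul_one_div_cancel hq.ne', Real.rpow_one]

lemma wedge_hasDeriv {n k : ℕ} (D : ℝ → Matrix (Fin n) (Fin n) ℝ)
    (hdiag : ∀ t ∈ Set.Ici (0:ℝ), ∀ i j : Fin n, i ≠ j → D t i j = 0)
    (x : Fin k → ℝ → (Fin n → ℝ))
    (hx : ∀ i, ∀ t ∈ Set.Ici (0:ℝ),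
      HasDerivWithinAt (x i) ((D t).mulVec (x i t)) (Set.Ici 0) t)
    (κ : IdxK n k) (t : ℝ) (ht : t ∈ Set.Ici (0:ℝ)) :
    HasDerivWithinAt (fun u => wedge (fun i => x i u) κ)
      ((∑ l ∈ κ.1, D t l l) * wedge (fun i => x i t) κ) (Set.Ici 0) t := by
  classical
  set ρ : Fin k → Fin n := fun i => ((κ.1.orderIsoOfFin κ.2) i : Fin n) with hρ
  set e : Fin k → Fin k :=
    fun j => (((Finset.univ : Finset (Fin k)).orderIsoOfFin (by simp) j : Fin k)) with he
  have key : ∀ u, wedge (fun i => x i u) κ =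
      ∑ σ : Equiv.Perm (Fin k), ((Equiv.Perm.sign σ : ℤ) : ℝ) * ∏ i, x (e i) u (ρ (σ i)) := by
    intro u
    rw [wedge, mulCompound, Matrix.det_apply']
    rfl
  have hκsum : ∀ d : Fin n → ℝ, ∑ l ∈ κ.1, d l = ∑ i : Fin k, d (ρ i) := by
    intro d
    rw [← Finset.sum_coe_sort κ.1 d]
    exact (Equiv.sum_comp (κ.1.orderIsoOfFin κ.2).toEquiv
      (fun l : κ.1 => d l)).symm
  have hterm : ∀ σ : Equiv.Perm (Fin k),
      HasDerivWithinAt (fun u => ∏ i, x (e i) u (ρ (σ i)))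
        ((∑ l ∈ κ.1, D t l l) * ∏ i, x (e i) t (ρ (σ i))) (Set.Ici 0) t := by
    intro σ
    have h1 : ∀ i : Fin k, HasDerivWithinAt (fun u => x (e i) u (ρ (σ i)))
        (D t (ρ (σ i)) (ρ (σ i)) * x (e i) t (ρ (σ i))) (Set.Ici 0) t := by
      intro i
      have hcomp := (hasDerivWithinAt_pi.1 (hx (e i) t ht)) (ρ (σ i))
      refine hcomp.congr_deriv (Eq.symm ?_)
      simp only [Matrix.mulVec, dotProduct]
      symm
      refine Finset.sum_eq_single (ρ (σ i)) ?_ ?_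
      · intro b _ hb
        rw [hdiag t ht _ _ (Ne.symm hb), zero_mul]
      · simp
    have h2 := HasDerivWithinAt.fun_finsetProd
      (u := Finset.univ) (f := fun i u => x (e i) u (ρ (σ i)))
      (f' := fun i => D t (ρ (σ i)) (ρ (σ i)) * x (e i) t (ρ (σ i)))
      (fun i _ => h1 i)
    refine h2.congr_deriv (Eq.symm ?_)
    rw [hκsum, ← Equiv.sum_comp σ (fun i => D t (ρ i) (ρ i)), Finset.sum_mul]
    refine Finset.sum_congr rfl fun i _ => ?_
    rw [smul_eq_mul, ← Finset.mul_prod_erase Finset.univ _ (Finset.mem_univ i)]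
    ring
  have h3 := HasDerivWithinAt.fun_sum (u := (Finset.univ : Finset (Equiv.Perm (Fin k))))
    (fun σ _ => (hterm σ).const_mul (((Equiv.Perm.sign σ : ℤ) : ℝ)))
  simp only [key]
  refine h3.congr_deriv (Eq.symm ?_)
  rw [Finset.mul_sum]
  exact Finset.sum_congr rfl fun σ _ => by ring

/-- if `D(t)` is diagonal and the sum of every `k` of its diagonal entries
is `≤ -η < 0` for all `t ≥ 0`, then `ẋ = D(t)x` is k-order contractive w.r.t. the `L_s`
norm for every `s ∈ {1,2,∞}`. -/
theorem diagonal_k_contraction {n : ℕ} (k : ℕ) (hk : 1 ≤ k) (hkn : k ≤ n)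
    (D : ℝ → Matrix (Fin n) (Fin n) ℝ)
    (hcont : ∀ i j : Fin n, ContinuousOn (fun t => D t i j) (Set.Ici 0))
    (hdiag : ∀ t ∈ Set.Ici (0 : ℝ), ∀ i j : Fin n, i ≠ j → D t i j = 0)
    (η : ℝ) (hη : 0 < η)
    (hsum : ∀ t ∈ Set.Ici (0 : ℝ), ∀ s : Finset (Fin n), s.card = k →
      ∑ i ∈ s, D t i i ≤ -η)
    (s : ℝ≥0∞) (hs : s = 1 ∨ s = 2 ∨ s = ⊤)
    (a : Fin k → (Fin n → ℝ)) (x : Fin k → ℝ → (Fin n → ℝ))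
    (hx0 : ∀ i, x i 0 = a i)
    (hx : ∀ i, ∀ t ∈ Set.Ici (0 : ℝ),
      HasDerivWithinAt (x i) ((D t).mulVec (x i t)) (Set.Ici 0) t) :
    ∀ t ∈ Set.Ici (0 : ℝ),
      lpnorm s (wedge fun i => x i t) ≤ Real.exp (-η * t) * lpnorm s (wedge a) := by
  intro t ht
  have hcomp : ∀ κ : IdxK n k,
      |wedge (fun i => x i t) κ| ≤ Real.exp (-η*t) * |wedge a κ| := by
    intro κ
    have hy : ∀ u ∈ Set.Ici (0:ℝ), HasDerivWithinAt (fun u => wedge (fun i => x i u) κ)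
        ((∑ l ∈ κ.1, D u l l) * wedge (fun i => x i u) κ) (Set.Ici 0) u :=
      fun u hu => wedge_hasDeriv D hdiag x hx κ u hu
    have hc : ∀ u ∈ Set.Ici (0:ℝ), (∑ l ∈ κ.1, D u l l) ≤ -η :=
      fun u hu => hsum u hu κ.1 κ.2
    have hdec := scalar_decay η (fun u => wedge (fun i => x i u) κ)
      (fun u => ∑ l ∈ κ.1, D u l l) hy hc t ht
    have h0 : (fun i => x i 0) = a := funext hx0
    rw [h0] at hdec
    exact hdec
  have hexp : (0:ℝ) ≤ Real.exp (-η*t) := (Real.exp_pos _).le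
  rcases hs with rfl | rfl | rfl
  · exact lpnorm_mono_fin 1 (by simp) (by simp) _ hexp _ _ hcomp
  · exact lpnorm_mono_fin 2 (by simp) (by simp) _ hexp _ _ hcomp
  · exact lpnorm_mono_top _ hexp _ _ hcomp


end
end

section
/- Let A ∈ ℝ^{n×n} and let B := tr(A)·I − A^T. For any M ∈ ℝ^{n×n}, let M̃ denote the matrix with entries m̃_{ij} := (−1)^{i+j} m_{n+1−i, n+1−j} for i, j ∈ [1,n]. Then the (n−1)-th additive compound of A satisfies A^{[n−1]} = B̃. -/
open Matrix Set Filter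
open scoped ENNReal

noncomputable section

section AuxCompound

/-- The increasing enumeration of `univ.erase a` is `a.succAbove`. -/
lemma orderIso_erase {m : ℕ} (a : Fin (m + 1)) (h : (Finset.univ.erase a).card = m + 1 - 1)
    (p : Fin (m + 1 - 1)) :
    ((Finset.univ.erase a).orderIsoOfFin h p : Fin (m + 1)) = a.succAbove p := by
  rw [Finset.coe_orderIsoOfFin_apply]
  exact (congrFun (Finset.orderEmbOfFin_unique h
    (f := a.succAbove)
    (fun x => Finset.mem_erase.2 ⟨Fin.succAbove_ne a x, Finset.mem_univ _⟩)
    (Fin.strictMono_succAbove a)) p).symm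

lemma mulCompound_erase {m : ℕ} (M : Matrix (Fin (m + 1)) (Fin (m + 1)) ℝ) (a b : Fin (m + 1))
    (κ lam : IdxK (m + 1) (m + 1 - 1)) (hκ : κ.1 = Finset.univ.erase a)
    (hlam : lam.1 = Finset.univ.erase b) :
    mulCompound (m + 1 - 1) M κ lam = (M.submatrix a.succAbove b.succAbove).det := by
  obtain ⟨s, hs⟩ := κ
  obtain ⟨t, ht⟩ := lam
  simp only at hκ hlam
  subst hκ; subst hlam
  have hmat : (Matrix.of fun p q : Fin (m + 1 - 1) =>
      M ((Finset.univ.erase a).orderIsoOfFin hs p : Fin (m + 1))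
        ((Finset.univ.erase b).orderIsoOfFin ht q : Fin (m + 1)))
      = M.submatrix a.succAbove b.succAbove := by
    ext p q
    simp only [Matrix.of_apply, Matrix.submatrix_apply, orderIso_erase]
  simp only [mulCompound]
  rw [hmat]

/-- Derivative of the determinant of an affine matrix family. -/
lemma hasDerivAt_det_affine {k : ℕ} (M0 M1 : Matrix (Fin k) (Fin k) ℝ) :
    HasDerivAt (fun ε : ℝ => (M0 + ε • M1).det)
      (∑ r, (M0.updateRow r (M1 r)).det) 0 := by
  classical
  have hdet : ∀ N : Matrix (Fin k) (Fin k) ℝ,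
      N.det = ∑ σ : Equiv.Perm (Fin k), ((Equiv.Perm.sign σ : ℤ) : ℝ) * ∏ p, N p (σ p) := by
    intro N
    rw [← Matrix.det_transpose N, Matrix.det_apply]
    refine Finset.sum_congr rfl fun σ _ => ?_
    simp [Units.smul_def, zsmul_eq_mul, Matrix.transpose_apply]
  have key : ∀ σ : Equiv.Perm (Fin k),
      HasDerivAt (fun ε : ℝ => ∏ p, (M0 p (σ p) + ε * M1 p (σ p)))
        (∑ p, (∏ q ∈ Finset.univ.erase p, M0 q (σ q)) * M1 p (σ p)) 0 := by
    intro σ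
    have h := HasDerivAt.fun_finsetProd (u := (Finset.univ : Finset (Fin k)))
      (f := fun p ε => M0 p (σ p) + ε * M1 p (σ p)) (f' := fun p => M1 p (σ p)) (x := (0 : ℝ))
      (fun p _ => by
        simpa using ((hasDerivAt_id (0 : ℝ)).mul_const (M1 p (σ p))).const_add (M0 p (σ p)))
    simpa [smul_eq_mul] using h
  have h2 : HasDerivAt (fun ε : ℝ => ∑ σ : Equiv.Perm (Fin k),
        ((Equiv.Perm.sign σ : ℤ) : ℝ) * ∏ p, (M0 p (σ p) + ε * M1 p (σ p)))
      (∑ σ : Equiv.Perm (Fin k), ((Equiv.Perm.sign σ : ℤ) : ℝ) *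
        ∑ p, (∏ q ∈ Finset.univ.erase p, M0 q (σ q)) * M1 p (σ p)) 0 :=
    HasDerivAt.fun_sum fun σ _ => (key σ).const_mul _
  have hfun : (fun ε : ℝ => (M0 + ε • M1).det) = fun ε : ℝ => ∑ σ : Equiv.Perm (Fin k),
      ((Equiv.Perm.sign σ : ℤ) : ℝ) * ∏ p, (M0 p (σ p) + ε * M1 p (σ p)) := by
    funext ε
    rw [hdet]
    refine Finset.sum_congr rfl fun σ _ => ?_
    refine congrArg _ (Finset.prod_congr rfl fun p _ => ?_)
    simp [Matrix.add_apply, Matrix.smul_apply]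
  have hval : (∑ σ : Equiv.Perm (Fin k), ((Equiv.Perm.sign σ : ℤ) : ℝ) *
        ∑ p, (∏ q ∈ Finset.univ.erase p, M0 q (σ q)) * M1 p (σ p))
      = ∑ r, (M0.updateRow r (M1 r)).det := by
    simp_rw [Finset.mul_sum]
    rw [Finset.sum_comm]
    refine Finset.sum_congr rfl fun r _ => ?_
    rw [hdet]
    refine Finset.sum_congr rfl fun σ _ => ?_
    have hprod : ∏ p, (M0.updateRow r (M1 r)) p (σ p)
        = M1 r (σ r) * ∏ q ∈ Finset.univ.erase r, M0 q (σ q) := by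
      rw [← Finset.mul_prod_erase Finset.univ _ (Finset.mem_univ r), Matrix.updateRow_self]
      congr 1
      refine Finset.prod_congr rfl fun q hq => ?_
      rw [Matrix.updateRow_ne (Finset.ne_of_mem_erase hq)]
    rw [hprod]
    ring
  rw [hfun]
  exact hval ▸ h2

/-- Expand a determinant along one replaced row. -/
lemma det_updateRow_expand {k : ℕ} (M : Matrix (Fin k) (Fin k) ℝ) (r : Fin k) (v : Fin k → ℝ) :
    (M.updateRow r v).det = ∑ s, v s * (M.updateRow r (Pi.single s 1)).det := by
  classical
  have h : ∀ t : Finset (Fin k),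
      (M.updateRow r (∑ s ∈ t, v s • (Pi.single s 1 : Fin k → ℝ))).det
        = ∑ s ∈ t, v s * (M.updateRow r (Pi.single s 1)).det := by
    intro t
    induction t using Finset.induction_on with
    | empty =>
        rw [Finset.sum_empty, Finset.sum_empty]
        exact Matrix.det_eq_zero_of_row_eq_zero r (fun q => by
          rw [Matrix.updateRow_self]; rfl)
    | insert _ _ hx ih =>
        rw [Finset.sum_insert hx, Finset.sum_insert hx, Matrix.det_updateRow_add,
          Matrix.det_updateRow_smul, ih]
  have hv : v = ∑ s, v s • (Pi.single s 1 : Fin k → ℝ) := by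
    funext q
    rw [Finset.sum_apply]
    simp [Pi.single_apply, mul_ite]
  conv_lhs => rw [hv]
  exact h Finset.univ

/-- Determinant of the identity matrix with two rows replaced by basis vectors. -/
lemma det_two_single {k : ℕ} (a b r s : Fin k) (hra : r ≠ a) :
    (((1 : Matrix (Fin k) (Fin k) ℝ).updateRow a (Pi.single b 1)).updateRow r
      (Pi.single s 1)).det
      = if a = b ∧ s = r then 1 else if b = r ∧ s = a then -1 else 0 := by
  classical
  have hone : ∀ t : Fin k, (1 : Matrix (Fin k) (Fin k) ℝ) t = Pi.single t 1 := by
    intro t; funext q; simp [Matrix.one_apply, Pi.single_apply, eq_comm]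
  set L := ((1 : Matrix (Fin k) (Fin k) ℝ).updateRow a (Pi.single b 1)).updateRow r
      (Pi.single s 1) with hL
  have hrowr : L r = Pi.single s 1 := Matrix.updateRow_self
  have hrowa : L a = Pi.single b 1 := by
    rw [hL, Matrix.updateRow_ne (Ne.symm hra), Matrix.updateRow_self]
  have hrow : ∀ t : Fin k, t ≠ a → t ≠ r → L t = Pi.single t 1 := by
    intro t ht1 ht2
    rw [hL, Matrix.updateRow_ne ht2, Matrix.updateRow_ne ht1, hone]
  by_cases hab : a = b
  · by_cases hsr : s = r
    · rw [if_pos ⟨hab, hsr⟩]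
      have hm : L = 1 := by
        funext t
        by_cases h1 : t = r
        · rw [h1, hrowr, hsr, hone]
        · by_cases h2 : t = a
          · rw [h2, hrowa, ← hab, hone]
          · rw [hrow t h2 h1, hone]
      rw [hm, Matrix.det_one]
    · rw [if_neg (fun h => hsr h.2), if_neg (fun h => hra (hab.trans h.1).symm)]
      by_cases hsa : s = a
      · refine Matrix.det_zero_of_row_eq (Ne.symm hra) ?_
        rw [hrowa, hrowr, hsa, hab]
      · refine Matrix.det_zero_of_row_eq (Ne.symm hsr) ?_
        rw [hrowr, hrow s hsa hsr]
  · by_cases hbr : b = r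
    · by_cases hsa : s = a
      · rw [if_neg (fun h => hab h.1), if_pos ⟨hbr, hsa⟩]
        have hm : L = (1 : Matrix (Fin k) (Fin k) ℝ).submatrix (Equiv.swap a r) id := by
          funext t q
          by_cases h1 : t = r
          · rw [h1, congrFun hrowr q]
            simp [Matrix.submatrix_apply, Equiv.swap_apply_right, Matrix.one_apply,
              Pi.single_apply, hsa, eq_comm]
          · by_cases h2 : t = a
            · rw [h2, congrFun hrowa q]
              simp [Matrix.submatrix_apply, Equiv.swap_apply_left, Matrix.one_apply,
                Pi.single_apply, hbr, eq_comm]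
            · rw [congrFun (hrow t h2 h1) q]
              simp [Matrix.submatrix_apply, Equiv.swap_apply_of_ne_of_ne h2 h1,
                Matrix.one_apply, Pi.single_apply, eq_comm]
        have hswap : Equiv.Perm.sign (Equiv.swap a r) = -1 :=
          Equiv.Perm.sign_swap (fun h => hra h.symm)
        rw [hm, Matrix.det_permute, Matrix.det_one, hswap]
        simp
      · rw [if_neg (fun h => hab h.1), if_neg (fun h => hsa h.2)]
        by_cases hsr : s = r
        · refine Matrix.det_zero_of_row_eq (Ne.symm hra) ?_
          rw [hrowa, hrowr, hbr, hsr]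
        · refine Matrix.det_zero_of_row_eq (Ne.symm hsr) ?_
          rw [hrowr, hrow s hsa hsr]
    · rw [if_neg (fun h => hab h.1), if_neg (fun h => hbr h.1)]
      refine Matrix.det_zero_of_row_eq hab ?_
      rw [hrowa, hrow b (Ne.symm hab) hbr]

end AuxCompound

/-- Schwarz: `A^{[n-1]} = B̃` where `B = tr(A)·I - Aᵀ` and
`m̃_{ij} = (-1)^{i+j} m_{n+1-i,n+1-j}`. Here the `(n-1)`-subsets are identified with
`Fin n` via the lexicographic order: the `i`-th subset is `univ.erase i.rev`. -/
theorem addCompound_pred {n : ℕ} (hn : 1 ≤ n) (A : Matrix (Fin n) (Fin n) ℝ)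
    (B : Matrix (Fin n) (Fin n) ℝ)
    (hB : B = A.trace • (1 : Matrix (Fin n) (Fin n) ℝ) - Aᵀ)
    (Bt : Matrix (Fin n) (Fin n) ℝ)
    (hBt : ∀ i j : Fin n, Bt i j = (-1 : ℝ) ^ ((i : ℕ) + (j : ℕ)) * B i.rev j.rev) :
    ∀ i j : Fin n,
      addCompound (n - 1) A
        ⟨Finset.univ.erase i.rev, by
          rw [Finset.card_erase_of_mem (Finset.mem_univ _)]; simp⟩
        ⟨Finset.univ.erase j.rev, by
          rw [Finset.card_erase_of_mem (Finset.mem_univ _)]; simp⟩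
      = Bt i j := by
  obtain ⟨m, rfl⟩ : ∃ m, n = m + 1 := ⟨n - 1, by omega⟩
  intro i j
  classical
  set a := i.rev with hadef
  set b := j.rev with hbdef
  set M0 : Matrix (Fin (m + 1)) (Fin (m + 1)) ℝ :=
    (1 : Matrix (Fin (m + 1)) (Fin (m + 1)) ℝ).updateRow a (Pi.single b 1) with hM0
  set M1 : Matrix (Fin (m + 1)) (Fin (m + 1)) ℝ :=
    A.updateRow a (0 : Fin (m + 1) → ℝ) with hM1
  set c : ℝ := (-1 : ℝ) ^ ((a : ℕ) + (b : ℕ)) with hc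
  have hsq : c * c = 1 := by
    rw [hc, ← pow_add]
    exact Even.neg_one_pow ⟨(a : ℕ) + (b : ℕ), by ring⟩
  -- pointwise identification of the compound with `c * det (M0 + ε • M1)`
  have hstep : ∀ ε : ℝ,
      mulCompound (m + 1 - 1) ((1 : Matrix (Fin (m + 1)) (Fin (m + 1)) ℝ) + ε • A)
        ⟨Finset.univ.erase a, by
          rw [Finset.card_erase_of_mem (Finset.mem_univ _)]; simp⟩
        ⟨Finset.univ.erase b, by
          rw [Finset.card_erase_of_mem (Finset.mem_univ _)]; simp⟩
      = c * (M0 + ε • M1).det := by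
    intro ε
    rw [mulCompound_erase _ a b _ _ rfl rfl]
    have hadj := Matrix.adjugate_fin_succ_eq_det_submatrix
      ((1 : Matrix (Fin (m + 1)) (Fin (m + 1)) ℝ) + ε • A) b a
    have h3 : (((1 : Matrix (Fin (m + 1)) (Fin (m + 1)) ℝ) + ε • A).submatrix
        a.succAbove b.succAbove).det
        = c * Matrix.adjugate ((1 : Matrix (Fin (m + 1)) (Fin (m + 1)) ℝ) + ε • A) b a := by
      rw [hadj, ← hc, ← mul_assoc, hsq, one_mul]
    rw [h3, Matrix.adjugate_apply]
    have h4 : ((1 : Matrix (Fin (m + 1)) (Fin (m + 1)) ℝ) + ε • A).updateRow a (Pi.single b 1)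
        = M0 + ε • M1 := by
      ext p q
      by_cases hp : p = a
      · subst hp
        simp [hM0, hM1, Matrix.updateRow_self, Matrix.add_apply, Matrix.smul_apply]
      · simp [hM0, hM1, Matrix.updateRow_ne hp, Matrix.add_apply, Matrix.smul_apply]
    rw [h4]
  have hd : HasDerivAt
      (fun ε : ℝ =>
        mulCompound (m + 1 - 1) ((1 : Matrix (Fin (m + 1)) (Fin (m + 1)) ℝ) + ε • A)
          ⟨Finset.univ.erase a, by
            rw [Finset.card_erase_of_mem (Finset.mem_univ _)]; simp⟩
          ⟨Finset.univ.erase b, by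
            rw [Finset.card_erase_of_mem (Finset.mem_univ _)]; simp⟩)
      (c * ∑ r, (M0.updateRow r (M1 r)).det) 0 :=
    ((hasDerivAt_det_affine M0 M1).const_mul c).congr_of_eventuallyEq
      (Filter.Eventually.of_forall hstep)
  rw [addCompound, hd.deriv]
  -- compute each term of the sum
  have hterm : ∀ r : Fin (m + 1), (M0.updateRow r (M1 r)).det
      = if r = a then 0 else if a = b then A r r else if r = b then -(A b a) else 0 := by
    intro r
    by_cases hra : r = a
    · rw [if_pos hra]
      refine Matrix.det_eq_zero_of_row_eq_zero r (fun q => ?_)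
      rw [Matrix.updateRow_self]
      have h0 : M1 r = 0 := by rw [hra, hM1, Matrix.updateRow_self]
      rw [h0]
      rfl
    · rw [if_neg hra]
      have hw : M1 r = A r := by rw [hM1]; exact Matrix.updateRow_ne hra
      rw [hw, det_updateRow_expand, Finset.sum_congr rfl
        (fun s _ => by rw [det_two_single a b r s hra])]
      by_cases hab : a = b
      · rw [if_pos hab]
        have habr : ¬ (b = r) := fun h => hra (h.symm.trans hab.symm)
        have hre : ∀ s : Fin (m + 1),
            A r s * (if a = b ∧ s = r then (1 : ℝ) else if b = r ∧ s = a then -1 else 0)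
            = if s = r then A r s else 0 := by
          intro s
          by_cases hsr : s = r
          · simp [hsr, hab, habr]
          · simp [hsr, habr]
        rw [Finset.sum_congr rfl fun s _ => hre s, Finset.sum_ite_eq' Finset.univ r]
        simp
      · rw [if_neg hab]
        by_cases hrb : r = b
        · rw [if_pos hrb]
          have hre : ∀ s : Fin (m + 1),
              A r s * (if a = b ∧ s = r then (1 : ℝ) else if b = r ∧ s = a then -1 else 0)
              = if s = a then -(A r s) else 0 := by
            intro s
            by_cases hsa : s = a
            · simp [hsa, hab, hrb.symm, Ne.symm hra]
            · simp [hsa, hab]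
          rw [Finset.sum_congr rfl fun s _ => hre s, Finset.sum_ite_eq' Finset.univ a]
          simp [hrb]
        · rw [if_neg hrb]
          have hre : ∀ s : Fin (m + 1),
              A r s * (if a = b ∧ s = r then (1 : ℝ) else if b = r ∧ s = a then -1 else 0)
              = 0 := by
            intro s
            have : ¬ (b = r) := fun h => hrb h.symm
            simp [hab, this]
          rw [Finset.sum_congr rfl fun s _ => hre s]
          simp
  rw [Finset.sum_congr rfl fun r _ => hterm r]
  -- the value of the sum
  have hsum : (∑ r : Fin (m + 1),
      if r = a then 0 else if a = b then A r r else if r = b then -(A b a) else 0)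
      = if a = b then A.trace - A a a else -(A b a) := by
    by_cases hab : a = b
    · rw [if_pos hab]
      have h1 : (∑ r : Fin (m + 1),
          if r = a then (0 : ℝ) else if a = b then A r r else if r = b then -(A b a) else 0)
          = ∑ r ∈ Finset.univ.erase a, A r r := by
        have hsplit := Finset.add_sum_erase Finset.univ
          (fun r : Fin (m + 1) => if r = a then (0 : ℝ) else if a = b then A r r
            else if r = b then -(A b a) else 0) (Finset.mem_univ a)
        rw [← hsplit]
        beta_reduce
        rw [if_pos rfl, zero_add]
        refine Finset.sum_congr rfl fun r hr => ?_
        rw [if_neg (Finset.ne_of_mem_erase hr), if_pos hab]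
      rw [h1]
      have h2 : A.trace = A a a + ∑ r ∈ Finset.univ.erase a, A r r :=
        (Finset.add_sum_erase _ _ (Finset.mem_univ a)).symm
      rw [h2]; ring
    · rw [if_neg hab]
      rw [Finset.sum_eq_single b]
      · have hba : ¬ (b = a) := fun h => hab h.symm
        simp [hba, hab]
      · intro r _ hr
        by_cases hra : r = a
        · simp [hra]
        · simp [hra, hab, hr]
      · simp
  rw [hsum, hBt, hB]
  -- parity of the sign
  have hia : (a : ℕ) + (i : ℕ) = m := by
    have := i.is_lt
    simp only [hadef, Fin.val_rev]
    omega
  have hjb : (b : ℕ) + (j : ℕ) = m := by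
    have := j.is_lt
    simp only [hbdef, Fin.val_rev]
    omega
  have hpar : c = (-1 : ℝ) ^ ((i : ℕ) + (j : ℕ)) := by
    have h3 : c * (-1 : ℝ) ^ ((i : ℕ) + (j : ℕ)) = 1 := by
      rw [hc, ← pow_add]
      exact Even.neg_one_pow ⟨m, by omega⟩
    have h4 : (-1 : ℝ) ^ ((i : ℕ) + (j : ℕ)) * (-1 : ℝ) ^ ((i : ℕ) + (j : ℕ)) = 1 := by
      rw [← pow_add]
      exact Even.neg_one_pow ⟨(i : ℕ) + (j : ℕ), by ring⟩
    calc c = c * ((-1 : ℝ) ^ ((i : ℕ) + (j : ℕ)) * (-1 : ℝ) ^ ((i : ℕ) + (j : ℕ))) := by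
          rw [h4, mul_one]
      _ = (c * (-1 : ℝ) ^ ((i : ℕ) + (j : ℕ))) * (-1 : ℝ) ^ ((i : ℕ) + (j : ℕ)) := by ring
      _ = (-1 : ℝ) ^ ((i : ℕ) + (j : ℕ)) := by rw [h3, one_mul]
  rw [hpar]
  have hBab : (A.trace • (1 : Matrix (Fin (m + 1)) (Fin (m + 1)) ℝ) - Aᵀ) a b
      = (if a = b then A.trace else 0) - A b a := by
    by_cases hab : a = b
    · simp [hab, Matrix.sub_apply, Matrix.smul_apply, Matrix.one_apply, Matrix.transpose_apply]
    · simp [hab, Matrix.sub_apply, Matrix.smul_apply, Matrix.one_apply, Matrix.transpose_apply]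
  rw [hBab]
  by_cases hab : a = b
  · rw [if_pos hab, if_pos hab, hab]
  · rw [if_neg hab, if_neg hab]
    ring

end
end

section
/- Let A : ℝ_+ → ℝ^{n×n} be continuous, with entries a_{ij}(t), and suppose there exists η > 0 such that for every column index ℓ ∈ [1,n] and every t ≥ 0, Σ_{i≠ℓ} ( |a_{iℓ}(t)| + a_{ii}(t) ) ≤ −η. Then μ_∞(A^{[n−1]}(t)) ≤ −η for all t ≥ 0, and consequently the LTV system ẋ(t) = A(t)x(t) is (n−1)-order contractive with respect to the L_∞ norm: for any a^1, …, a^{n−1} ∈ ℝ^n and all t ≥ 0, | x(t,a^1) ∧ ⋯ ∧ x(t,a^{n−1}) |_∞ ≤ e^{−ηt} | a^1 ∧ ⋯ ∧ a^{n−1} |_∞, where x(t,a) is the solution with x(0) = a. -/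
open Matrix Set Filter
open scoped ENNReal

noncomputable section

/-! ### Auxiliary lemmas -/

open scoped Topology

section SupNorm
variable {ι : Type*} [Fintype ι]

lemma lpnorm_top_eq [Nonempty ι] (x : ι → ℝ) :
    lpnorm ⊤ x = Finset.univ.sup' Finset.univ_nonempty (fun i => |x i|) := by
  rw [lpnorm, if_pos rfl, Finset.sup'_univ_eq_ciSup]

lemma lpnorm_top_le [Nonempty ι] {x : ι → ℝ} {b : ℝ}
    (h : ∀ i, |x i| ≤ b) : lpnorm ⊤ x ≤ b := by
  rw [lpnorm_top_eq]; exact Finset.sup'_le _ _ fun i _ => h i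

lemma le_lpnorm_top [Nonempty ι] (x : ι → ℝ) (i : ι) :
    |x i| ≤ lpnorm ⊤ x := by
  rw [lpnorm_top_eq]; exact Finset.le_sup' (fun i => |x i|) (Finset.mem_univ i)

lemma inducedNorm_top [Nonempty ι] (M : Matrix ι ι ℝ) :
    inducedNorm (lpnorm ⊤) M
      = Finset.univ.sup' Finset.univ_nonempty (fun i => ∑ j, |M i j|) := by
  set R := Finset.univ.sup' Finset.univ_nonempty (fun i => ∑ j, |M i j|) with hR
  apply IsGreatest.csSup_eq
  constructor
  · obtain ⟨i0, -, hi0⟩ := Finset.exists_mem_eq_sup' (Finset.univ_nonempty (α := ι))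
      (fun i => ∑ j, |M i j|)
    refine ⟨fun j => if 0 ≤ M i0 j then 1 else -1, ?_, ?_⟩
    · have : ∀ j, |(fun j => if 0 ≤ M i0 j then (1:ℝ) else -1) j| = 1 := by
        intro j; by_cases h : 0 ≤ M i0 j <;> simp [h]
      rw [lpnorm_top_eq]
      rw [show (fun j => |(fun j => if 0 ≤ M i0 j then (1:ℝ) else -1) j|) = fun _ => (1:ℝ)
        from funext this]
      simp
    · have hrow : M.mulVec (fun j => if 0 ≤ M i0 j then (1:ℝ) else -1) i0 = ∑ j, |M i0 j| := by
        rw [Matrix.mulVec]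
        refine Finset.sum_congr rfl fun j _ => ?_
        by_cases h : 0 ≤ M i0 j
        · simp [h, abs_of_nonneg h]
        · simp only [if_neg h, abs_of_neg (lt_of_not_ge h)]; ring
      have hub : ∀ i, |M.mulVec (fun j => if 0 ≤ M i0 j then (1:ℝ) else -1) i| ≤ R := by
        intro i
        calc |M.mulVec _ i| ≤ ∑ j, |M i j * (if 0 ≤ M i0 j then (1:ℝ) else -1)| :=
              Finset.abs_sum_le_sum_abs _ _
          _ ≤ ∑ j, |M i j| := by
              refine Finset.sum_le_sum fun j _ => ?_
              rw [abs_mul]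
              by_cases h : 0 ≤ M i0 j <;> simp [h]
          _ ≤ R := by rw [hR]; exact Finset.le_sup' (fun i => ∑ j, |M i j|) (Finset.mem_univ i)
      refine (le_antisymm (lpnorm_top_le hub) ?_).symm
      calc R = ∑ j, |M i0 j| := hi0
        _ = |M.mulVec (fun j => if 0 ≤ M i0 j then (1:ℝ) else -1) i0| := by
            rw [hrow]; exact (abs_of_nonneg (Finset.sum_nonneg fun j _ => abs_nonneg _)).symm
        _ ≤ _ := le_lpnorm_top _ i0
  · rintro c ⟨x, hx1, rfl⟩
    have hxj : ∀ j, |x j| ≤ 1 := fun j => hx1 ▸ le_lpnorm_top x j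
    refine lpnorm_top_le fun i => ?_
    calc |M.mulVec x i| ≤ ∑ j, |M i j * x j| := Finset.abs_sum_le_sum_abs _ _
      _ ≤ ∑ j, |M i j| := by
          refine Finset.sum_le_sum fun j _ => ?_
          rw [abs_mul]
          exact mul_le_of_le_one_right (abs_nonneg _) (hxj j)
      _ ≤ R := by rw [hR]; exact Finset.le_sup' (fun i => ∑ j, |M i j|) (Finset.mem_univ i)

lemma matMeasure_top_le [DecidableEq ι] [Nonempty ι]
    (M : Matrix ι ι ℝ) {b : ℝ}
    (h : ∀ i, M i i + ∑ j ∈ Finset.univ.erase i, |M i j| ≤ b) :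
    matMeasure (lpnorm ⊤) M ≤ b := by
  set μ := Finset.univ.sup' Finset.univ_nonempty
    (fun i => M i i + ∑ j ∈ Finset.univ.erase i, |M i j|) with hμ
  set c := Finset.univ.sup' Finset.univ_nonempty (fun i => |M i i|) with hc
  have hc0 : 0 ≤ c := by
    obtain ⟨i⟩ := ‹Nonempty ι›
    exact le_trans (abs_nonneg _) (Finset.le_sup' (fun i => |M i i|) (Finset.mem_univ i))
  have hcc : ∀ i, |M i i| ≤ c := fun i => Finset.le_sup' (fun i => |M i i|) (Finset.mem_univ i)
  have hε₀ : (0:ℝ) < (c+1)⁻¹ := by positivity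
  have key : ∀ ε : ℝ, 0 ≤ ε → ε < (c+1)⁻¹ →
      inducedNorm (lpnorm ⊤) ((1 : Matrix ι ι ℝ) + ε • M) = 1 + ε * μ := by
    intro ε hε hεlt
    rw [inducedNorm_top]
    have row : ∀ i, ∑ j, |((1 : Matrix ι ι ℝ) + ε • M) i j|
        = 1 + ε * (M i i + ∑ j ∈ Finset.univ.erase i, |M i j|) := by
      intro i
      rw [← Finset.add_sum_erase _ _ (Finset.mem_univ i)]
      have hdiag : |((1 : Matrix ι ι ℝ) + ε • M) i i| = 1 + ε * M i i := by
        have h1 : ε * |M i i| < 1 := by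
          calc ε * |M i i| ≤ ε * (c+1) := by
                refine mul_le_mul_of_nonneg_left ?_ hε
                linarith [hcc i]
            _ < (c+1)⁻¹ * (c+1) := by
                apply mul_lt_mul_of_pos_right hεlt; linarith
            _ = 1 := by field_simp
        rw [Matrix.add_apply, Matrix.smul_apply, Matrix.one_apply_eq, smul_eq_mul]
        rw [abs_of_pos]
        have := neg_abs_le (M i i)
        nlinarith [abs_nonneg (M i i)]
      have hoff : ∀ j ∈ Finset.univ.erase i, |((1 : Matrix ι ι ℝ) + ε • M) i j| = ε * |M i j| := by
        intro j hj
        have hji : j ≠ i := (Finset.mem_erase.1 hj).1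
        rw [Matrix.add_apply, Matrix.smul_apply, Matrix.one_apply_ne (Ne.symm hji), smul_eq_mul,
          zero_add, abs_mul, abs_of_nonneg hε]
      rw [hdiag, Finset.sum_congr rfl hoff, ← Finset.mul_sum]
      ring
    rw [Finset.sup'_congr Finset.univ_nonempty rfl (fun i _ => row i)]
    have hg : ∀ x y : ℝ, 1 + ε * (x ⊔ y) = (1 + ε * x) ⊔ (1 + ε * y) := by
      intro x y
      rw [mul_max_of_nonneg _ _ hε, max_add_add_left]
    exact (Finset.comp_sup'_eq_sup'_comp Finset.univ_nonempty (fun y => 1 + ε * y) hg).symm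
  have hev : ∀ᶠ ε in 𝓝[Set.Ici (0:ℝ)] 0,
      inducedNorm (lpnorm ⊤) ((1 : Matrix ι ι ℝ) + ε • M) = 1 + ε * μ := by
    filter_upwards [self_mem_nhdsWithin,
      mem_nhdsWithin_of_mem_nhds (Iio_mem_nhds hε₀)] with ε h1 h2
    exact key ε h1 h2
  have hlin : HasDerivWithinAt (fun ε : ℝ => 1 + ε * μ) μ (Set.Ici 0) 0 := by
    simpa using ((hasDerivWithinAt_id (0:ℝ) (Set.Ici 0)).mul_const μ).const_add 1
  have hf : HasDerivWithinAt (fun ε : ℝ => inducedNorm (lpnorm ⊤) ((1 : Matrix ι ι ℝ) + ε • M))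
      μ (Set.Ici 0) 0 := by
    refine hlin.congr_of_eventuallyEq ?_ ?_
    · exact hev
    · rw [key 0 le_rfl hε₀]
  have : matMeasure (lpnorm ⊤) M = μ := hf.derivWithin (uniqueDiffOn_Ici 0 0 self_mem_Ici)
  rw [this]
  exact Finset.sup'_le _ _ fun i _ => h i

end SupNorm

-- determinant of identity with one row replaced
lemma det_one_updateRow {ι : Type*} [Fintype ι] [DecidableEq ι] (i : ι) (v : ι → ℝ) :
    ((1 : Matrix ι ι ℝ).updateRow i v).det = v i := by
  have : ((1 : Matrix ι ι ℝ).updateRow i v) = ((1 : Matrix ι ι ℝ).updateCol i v)ᵀ := by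
    rw [← Matrix.updateRow_transpose, Matrix.transpose_one]
  rw [this, Matrix.det_transpose, ← Matrix.cramer_apply, Matrix.cramer_one]
  rfl

-- abs of det of a matrix whose rows, except one, are distinct basis vectors
lemma abs_det_of_rows_single {ι : Type*} [Fintype ι] [DecidableEq ι] (M : Matrix ι ι ℝ)
    (π : Equiv.Perm ι) (a0 : ι)
    (h : ∀ i, i ≠ a0 → ∀ c, M i c = if c = π i then 1 else 0) :
    |M.det| = |M a0 (π a0)| := by
  have hM' : M.submatrix id π = (1 : Matrix ι ι ℝ).updateRow a0 (fun c => M a0 (π c)) := by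
    ext i c
    by_cases hi : i = a0
    · subst hi; simp [Matrix.updateRow_apply]
    · rw [Matrix.submatrix_apply, id_eq, h i hi, Matrix.updateRow_apply, if_neg hi]
      simp [Matrix.one_apply, Equiv.apply_eq_iff_eq, eq_comm]
  have h1 : (M.submatrix id π).det = M a0 (π a0) := by
    rw [hM', det_one_updateRow]
  have h2 := Matrix.det_permute' π M
  rw [h1] at h2
  have : |(Equiv.Perm.sign π : ℝ) * M.det| = |M.det| := by
    rcases Int.units_eq_one_or (Equiv.Perm.sign π) with hs | hs <;> simp [hs, abs_mul]
  rw [← this, ← h2]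

/-- derivative of a determinant whose rows depend on a real parameter -/
lemma det_hasDerivWithinAt {ι : Type*} [Fintype ι] [DecidableEq ι]
    {R : ι → ℝ → ι → ℝ} {R' : ι → ι → ℝ} {s : Set ℝ} {x : ℝ}
    (h : ∀ i c, HasDerivWithinAt (fun t => R i t c) (R' i c) s x) :
    HasDerivWithinAt (fun t => Matrix.det (Matrix.of fun i c => R i t c))
      (∑ i, Matrix.det (Matrix.of (Function.update (fun i' c => R i' x c) i (R' i)))) s x := by
  have key : ∀ t, Matrix.det (Matrix.of fun i c => R i t c)
      = ∑ σ : Equiv.Perm ι, ((Equiv.Perm.sign σ : ℤ) : ℝ) * ∏ c, R (σ c) t c := by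
    intro t
    rw [Matrix.det_apply]
    refine Finset.sum_congr rfl fun σ _ => ?_
    simp [Units.smul_def, zsmul_eq_mul]
  have main : HasDerivWithinAt (fun t => ∑ σ : Equiv.Perm ι, ((Equiv.Perm.sign σ : ℤ) : ℝ) * ∏ c, R (σ c) t c)
      (∑ σ : Equiv.Perm ι, ((Equiv.Perm.sign σ : ℤ) : ℝ) *
        (∑ c, (∏ c' ∈ Finset.univ.erase c, R (σ c') x c') • R' (σ c) c)) s x := by
    apply HasDerivWithinAt.fun_sum
    intro σ _
    exact (HasDerivWithinAt.fun_finsetProd (fun c _ => h (σ c) c)).const_mul _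
  have : (fun t => Matrix.det (Matrix.of fun i c => R i t c))
      = fun t => ∑ σ : Equiv.Perm ι, ((Equiv.Perm.sign σ : ℤ) : ℝ) * ∏ c, R (σ c) t c :=
    funext key
  rw [this]
  convert main using 1
  -- value equality
  have detu : ∀ i, (Matrix.of (Function.update (fun i' c => R i' x c) i (R' i))).det
      = ∑ σ : Equiv.Perm ι, ((Equiv.Perm.sign σ : ℤ) : ℝ) *
          ∏ c, Function.update (fun i' c => R i' x c) i (R' i) (σ c) c := by
    intro i
    rw [Matrix.det_apply]
    refine Finset.sum_congr rfl fun σ _ => ?_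
    simp [Units.smul_def, zsmul_eq_mul]
  calc ∑ i, (Matrix.of (Function.update (fun i' c => R i' x c) i (R' i))).det
      = ∑ i, ∑ σ : Equiv.Perm ι, ((Equiv.Perm.sign σ : ℤ) : ℝ) *
          ∏ c, Function.update (fun i' c => R i' x c) i (R' i) (σ c) c :=
        Finset.sum_congr rfl fun i _ => detu i
    _ = ∑ σ : Equiv.Perm ι, ∑ i, ((Equiv.Perm.sign σ : ℤ) : ℝ) *
          ∏ c, Function.update (fun i' c => R i' x c) i (R' i) (σ c) c := Finset.sum_comm
    _ = ∑ σ : Equiv.Perm ι, ((Equiv.Perm.sign σ : ℤ) : ℝ) *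
        (∑ c, (∏ c' ∈ Finset.univ.erase c, R (σ c') x c') • R' (σ c) c) := by
        refine Finset.sum_congr rfl fun σ _ => ?_
        rw [Finset.mul_sum]
        refine (Fintype.sum_equiv σ _ _ fun c => ?_).symm
        congr 1
        rw [← Finset.mul_prod_erase Finset.univ _ (Finset.mem_univ c)]
        rw [Function.update_self]
        have : ∀ c' ∈ Finset.univ.erase c,
            Function.update (fun i' c'' => R i' x c'') (σ c) (R' (σ c)) (σ c') c'
              = R (σ c') x c' := by
          intro c' hc'
          rw [Function.update_of_ne (fun hh => (Finset.mem_erase.1 hc').1 (σ.injective hh))]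
        rw [Finset.prod_congr rfl this, smul_eq_mul]
        ring
lemma erase_card {m : ℕ} (p : Fin (m+1)) : (Finset.univ.erase p).card = m := by simp

def EIdx {m : ℕ} (p : Fin (m+1)) : IdxK (m+1) m := ⟨Finset.univ.erase p, erase_card p⟩

lemma orderIso_erase_s13 {m : ℕ} (p : Fin (m+1)) (i : Fin m) :
    (((Finset.univ.erase p).orderIsoOfFin (erase_card p)) i).1 = p.succAbove i := by
  have h := Finset.orderEmbOfFin_unique (erase_card p)
    (f := p.succAbove) (fun x => Finset.mem_erase.2 ⟨Fin.succAbove_ne p x, Finset.mem_univ _⟩)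
    (Fin.strictMono_succAbove p)
  rw [Finset.coe_orderIsoOfFin_apply, ← h]

lemma mulCompound_erase_s13 {m : ℕ} (M : Matrix (Fin (m+1)) (Fin (m+1)) ℝ) (p q : Fin (m+1)) :
    mulCompound m M (EIdx p) (EIdx q)
      = (Matrix.of fun i j : Fin m => M (p.succAbove i) (q.succAbove j)).det := by
  unfold mulCompound
  congr 1
  ext i j
  simp only [Matrix.of_apply, EIdx]
  exact congr_arg₂ M (orderIso_erase_s13 p i) (orderIso_erase_s13 q j)

lemma addCompound_erase {m : ℕ} (A : Matrix (Fin (m+1)) (Fin (m+1)) ℝ) (p q : Fin (m+1)) :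
    addCompound m A (EIdx p) (EIdx q)
      = ∑ i : Fin m, (Matrix.of (Function.update
          (fun i' c => if p.succAbove i' = q.succAbove c then (1:ℝ) else 0)
          i (fun c => A (p.succAbove i) (q.succAbove c)))).det := by
  have hfun : (fun ε : ℝ => mulCompound m ((1 : Matrix (Fin (m+1)) (Fin (m+1)) ℝ) + ε • A) (EIdx p) (EIdx q))
      = fun ε : ℝ => Matrix.det (Matrix.of fun i c : Fin m =>
        (if p.succAbove i = q.succAbove c then (1:ℝ) else 0) + ε * A (p.succAbove i) (q.succAbove c)) := by
    funext ε
    rw [mulCompound_erase_s13]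
    refine congrArg Matrix.det ?_
    ext i c
    simp [Matrix.one_apply]
  have hd : ∀ (i : Fin m) (c : Fin m), HasDerivAt (fun ε : ℝ =>
      (if p.succAbove i = q.succAbove c then (1:ℝ) else 0) + ε * A (p.succAbove i) (q.succAbove c))
      (A (p.succAbove i) (q.succAbove c)) 0 := by
    intro i c
    simpa using (hasDerivAt_mul_const (A (p.succAbove i) (q.succAbove c))).const_add
      (if p.succAbove i = q.succAbove c then (1:ℝ) else 0)
  have hder := det_hasDerivWithinAt (s := Set.univ) (x := 0)
    (R := fun i ε c => (if p.succAbove i = q.succAbove c then (1:ℝ) else 0) + ε * A (p.succAbove i) (q.succAbove c))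
    (R' := fun i c => A (p.succAbove i) (q.succAbove c))
    (fun i c => (hd i c).hasDerivWithinAt)
  rw [hasDerivWithinAt_univ] at hder
  rw [addCompound, hfun, hder.deriv]
  refine Finset.sum_congr rfl fun i _ => ?_
  congr 1
  ext i' c
  by_cases hi : i' = i
  · subst hi; simp
  · simp only [Matrix.of_apply, Function.update_of_ne hi]
    simp

lemma addCompound_diag {m : ℕ} (A : Matrix (Fin (m+1)) (Fin (m+1)) ℝ) (p : Fin (m+1)) :
    addCompound m A (EIdx p) (EIdx p) = ∑ i : Fin m, A (p.succAbove i) (p.succAbove i) := by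
  rw [addCompound_erase]
  refine Finset.sum_congr rfl fun i _ => ?_
  have h1 : (fun i' c : Fin m => if p.succAbove i' = p.succAbove c then (1:ℝ) else 0)
      = (1 : Matrix (Fin m) (Fin m) ℝ) := by
    ext i' c
    simp [Matrix.one_apply, Fin.succAbove_right_injective.eq_iff]
  rw [h1]
  have : Matrix.of (Function.update ((1 : Matrix (Fin m) (Fin m) ℝ) : Fin m → Fin m → ℝ) i
      (fun c => A (p.succAbove i) (p.succAbove c)))
      = (1 : Matrix (Fin m) (Fin m) ℝ).updateRow i (fun c => A (p.succAbove i) (p.succAbove c)) := rfl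
  rw [this, det_one_updateRow]

lemma addCompound_offdiag_abs {m : ℕ} (A : Matrix (Fin (m+1)) (Fin (m+1)) ℝ) {p q : Fin (m+1)}
    (hpq : p ≠ q) : |addCompound m A (EIdx p) (EIdx q)| = |A q p| := by
  rw [addCompound_erase]
  -- the unique row index a0 with p.succAbove a0 = q
  obtain ⟨a0, ha0⟩ := Fin.exists_succAbove_eq (Ne.symm hpq)
  -- all terms except i = a0 vanish
  have hzero : ∀ i : Fin m, i ≠ a0 → (Matrix.of (Function.update
      (fun i' c => if p.succAbove i' = q.succAbove c then (1:ℝ) else 0)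
      i (fun c => A (p.succAbove i) (q.succAbove c)))).det = 0 := by
    intro i hi
    apply Matrix.det_eq_zero_of_row_eq_zero a0
    intro c
    simp only [Matrix.of_apply, Function.update_of_ne (Ne.symm hi)]
    rw [ha0, if_neg (Ne.symm (Fin.succAbove_ne q c))]
  rw [Finset.sum_eq_single a0 (fun i _ hi => hzero i hi) (fun h => absurd (Finset.mem_univ a0) h)]
  -- construct the permutation π
  have hswap : ∀ i : Fin m, Equiv.swap p q (p.succAbove i) ≠ q := by
    intro i
    by_cases h : p.succAbove i = q
    · rw [h, Equiv.swap_apply_right]; exact hpq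
    · rw [Equiv.swap_apply_of_ne_of_ne (Fin.succAbove_ne p i) h]; exact h
  have hex : ∀ i : Fin m, ∃ c, q.succAbove c = Equiv.swap p q (p.succAbove i) :=
    fun i => Fin.exists_succAbove_eq (hswap i)
  choose f hf using hex
  have hinj : Function.Injective f := by
    intro a b hab
    have := congrArg q.succAbove hab
    rw [hf, hf] at this
    exact Fin.succAbove_right_injective ((Equiv.swap p q).injective this)
  let π : Equiv.Perm (Fin m) := Equiv.ofBijective f (Finite.injective_iff_bijective.mp hinj)
  have hπ : ∀ i, π i = f i := fun i => rfl
  have habs := abs_det_of_rows_single (Matrix.of (Function.update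
      (fun i' c => if p.succAbove i' = q.succAbove c then (1:ℝ) else 0)
      a0 (fun c => A (p.succAbove a0) (q.succAbove c)))) π a0 ?_
  · rw [habs]
    simp only [Matrix.of_apply, Function.update_self]
    rw [ha0, hπ]
    have : q.succAbove (f a0) = p := by
      rw [hf, ha0, Equiv.swap_apply_right]
    rw [this]
  · intro i hi c
    simp only [Matrix.of_apply, Function.update_of_ne hi]
    have hqi : q.succAbove (π i) = p.succAbove i := by
      rw [hπ, hf]
      apply Equiv.swap_apply_of_ne_of_ne (Fin.succAbove_ne p i)
      intro h
      exact hi (Fin.succAbove_right_injective (ha0 ▸ h : p.succAbove i = p.succAbove a0))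
    by_cases h : c = π i
    · subst h; rw [if_pos hqi.symm, if_pos rfl]
    · rw [if_neg, if_neg h]
      intro hc
      exact h (Fin.succAbove_right_injective (p := q) (by rw [hqi, hc]))
lemma EIdx_injective {m : ℕ} : Function.Injective (EIdx (m := m)) := by
  intro p q h
  by_contra hpq
  have h1 : p ∈ Finset.univ.erase q := Finset.mem_erase.2 ⟨hpq, Finset.mem_univ _⟩
  have h2 : (EIdx q).1 = Finset.univ.erase q := rfl
  rw [← h, show (EIdx p).1 = Finset.univ.erase p from rfl] at h2
  rw [← h2] at h1
  exact Finset.notMem_erase p _ h1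

lemma EIdx_surjective {m : ℕ} : Function.Surjective (EIdx (m := m)) := by
  rintro ⟨s, hs⟩
  have hc : sᶜ.card = 1 := by
    rw [Finset.card_compl, hs]
    simp
  obtain ⟨p, hp⟩ := Finset.card_eq_one.mp hc
  refine ⟨p, ?_⟩
  apply Subtype.ext
  show Finset.univ.erase p = s
  rw [← Finset.compl_singleton, ← hp, compl_compl]

instance {m : ℕ} : Nonempty (IdxK (m+1) m) := ⟨EIdx 0⟩

lemma part1 {m : ℕ} (A : Matrix (Fin (m+1)) (Fin (m+1)) ℝ) {η : ℝ}
    (hcolt : ∀ l : Fin (m+1), ∑ i ∈ Finset.univ.erase l, (|A i l| + A i i) ≤ -η) :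
    matMeasure (lpnorm ⊤) (addCompound m A) ≤ -η := by
  apply matMeasure_top_le
  intro κ
  obtain ⟨p, rfl⟩ := EIdx_surjective κ
  have hdiag : addCompound m A (EIdx p) (EIdx p) = ∑ i ∈ Finset.univ.erase p, A i i := by
    rw [addCompound_diag, Finset.sum_erase_eq_sub (Finset.mem_univ p),
      Fin.sum_univ_succAbove (fun j => A j j) p]
    ring
  have hsum : ∑ lam ∈ Finset.univ.erase (EIdx p), |addCompound m A (EIdx p) lam|
      = ∑ q ∈ Finset.univ.erase p, |A q p| := by
    refine (Finset.sum_bij (fun q _ => EIdx q) ?_ ?_ ?_ ?_).symm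
    · intro q hq
      exact Finset.mem_erase.2 ⟨fun h => (Finset.mem_erase.1 hq).1 (EIdx_injective h),
        Finset.mem_univ _⟩
    · intro a _ b _ h
      exact EIdx_injective h
    · intro lam hlam
      obtain ⟨q, rfl⟩ := EIdx_surjective lam
      exact ⟨q, Finset.mem_erase.2 ⟨fun h => (Finset.mem_erase.1 hlam).1 (by rw [h]),
        Finset.mem_univ _⟩, rfl⟩
    · intro q hq
      exact (addCompound_offdiag_abs A (fun h => (Finset.mem_erase.1 hq).1 h.symm)).symm
  rw [hdiag, hsum]
  calc ∑ i ∈ Finset.univ.erase p, A i i + ∑ q ∈ Finset.univ.erase p, |A q p|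
      = ∑ i ∈ Finset.univ.erase p, (|A i p| + A i i) := by
        rw [← Finset.sum_add_distrib]
        exact Finset.sum_congr rfl fun i _ => by ring
    _ ≤ -η := hcolt p

lemma det_updateRow_eq_cramer {ι : Type*} [Fintype ι] [DecidableEq ι]
    (B : Matrix ι ι ℝ) (j : ι) (v : ι → ℝ) :
    (B.updateRow j v).det = Matrix.cramer Bᵀ v j := by
  rw [Matrix.cramer_apply]
  have h : Bᵀ.updateCol j v = (B.updateRow j v)ᵀ := by
    ext i c
    simp [Matrix.updateCol_apply, Matrix.updateRow_apply, Matrix.transpose_apply]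
  rw [h, Matrix.det_transpose]

lemma vec_decomp {ι : Type*} [Fintype ι] [DecidableEq ι] (v : ι → ℝ) :
    v = ∑ r, v r • (Pi.single r 1 : ι → ℝ) := by
  funext c
  simp [Finset.sum_apply, Pi.single_apply]

lemma sum_det_updateRow_mulVec {ι : Type*} [Fintype ι] [DecidableEq ι]
    (B A : Matrix ι ι ℝ) :
    ∑ j, (B.updateRow j (A.mulVec (B j))).det = Matrix.trace A * B.det := by
  have hstep : ∀ j, (B.updateRow j (A.mulVec (B j))).det
      = ∑ r, A.mulVec (B j) r * Matrix.adjugate B r j := by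
    intro j
    rw [det_updateRow_eq_cramer]
    conv_lhs => rw [vec_decomp (A.mulVec (B j))]
    rw [map_sum, Finset.sum_apply]
    refine Finset.sum_congr rfl fun r _ => ?_
    rw [LinearMap.map_smul]
    simp only [Pi.smul_apply, smul_eq_mul]
    rfl
  calc ∑ j, (B.updateRow j (A.mulVec (B j))).det
      = ∑ j, ∑ r, A.mulVec (B j) r * Matrix.adjugate B r j :=
        Finset.sum_congr rfl fun j _ => hstep j
    _ = ∑ r, ∑ j, A.mulVec (B j) r * Matrix.adjugate B r j := Finset.sum_comm
    _ = ∑ r, ∑ q, A r q * ((Matrix.adjugate B * B) r q) := by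
        refine Finset.sum_congr rfl fun r _ => ?_
        simp only [Matrix.mulVec, dotProduct, Matrix.mul_apply, Finset.sum_mul,
          Finset.mul_sum]
        rw [Finset.sum_comm]
        refine Finset.sum_congr rfl fun q _ => Finset.sum_congr rfl fun j _ => by ring
    _ = ∑ r, A r r * B.det := by
        refine Finset.sum_congr rfl fun r _ => ?_
        rw [Matrix.adjugate_mul]
        simp [Matrix.smul_apply, Matrix.one_apply, mul_ite, Finset.sum_ite_eq]
    _ = Matrix.trace A * B.det := by
        rw [Matrix.trace, Finset.sum_mul]
        rfl
def rowsOf {m : ℕ} (u : Fin m → Fin (m+1) → ℝ) (v : Fin (m+1) → ℝ) :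
    Fin (m+1) → Fin (m+1) → ℝ := Fin.snoc u v

@[simp] lemma rowsOf_castSucc {m : ℕ} (u : Fin m → Fin (m+1) → ℝ) (v : Fin (m+1) → ℝ)
    (i : Fin m) : rowsOf u v (Fin.castSucc i) = u i := by
  simp [rowsOf]

@[simp] lemma rowsOf_last {m : ℕ} (u : Fin m → Fin (m+1) → ℝ) (v : Fin (m+1) → ℝ) :
    rowsOf u v (Fin.last m) = v := by
  simp [rowsOf]

lemma z_hasDeriv {m : ℕ} (At : Matrix (Fin (m+1)) (Fin (m+1)) ℝ)
    (x : Fin m → ℝ → Fin (m+1) → ℝ) (S : Set ℝ) (s : ℝ)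
    (hx : ∀ i, HasDerivWithinAt (x i) (At.mulVec (x i s)) S s) (p : Fin (m+1)) :
    HasDerivWithinAt
      (fun t => (Matrix.of fun i c => rowsOf (fun i' => x i' t) (Pi.single p (1:ℝ)) i c).det)
      (∑ q, ((if p = q then Matrix.trace At else 0) - At q p) *
        (Matrix.of fun i c => rowsOf (fun i' => x i' s) (Pi.single q (1:ℝ)) i c).det) S s := by
  set B : Matrix (Fin (m+1)) (Fin (m+1)) ℝ :=
    Matrix.of fun i c => rowsOf (fun i' => x i' s) (Pi.single p (1:ℝ)) i c with hB
  have hder := det_hasDerivWithinAt (s := S) (x := s)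
    (R := fun i t c => rowsOf (fun i' => x i' t) (Pi.single p (1:ℝ)) i c)
    (R' := rowsOf (fun i' => At.mulVec (x i' s)) (0 : Fin (m+1) → ℝ)) ?_
  · convert hder using 1
    symm
    -- value equality
    have hupd : ∀ (i : Fin (m+1)) (v : Fin (m+1) → ℝ),
        Matrix.of (Function.update
          (fun i' c => rowsOf (fun i'' => x i'' s) (Pi.single p (1:ℝ)) i' c) i v)
          = B.updateRow i v := by
      intro i v
      ext a b
      by_cases ha : a = i
      · subst ha; simp [Matrix.updateRow_apply]
      · simp [Matrix.updateRow_apply, ha, Function.update_of_ne ha, hB]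
    have hrow : ∀ i' : Fin m, B (Fin.castSucc i') = x i' s := by
      intro i'
      funext c
      simp [hB]
    have hlastrow : B (Fin.last m) = Pi.single p 1 := by
      funext c
      simp [hB]
    rw [Fin.sum_univ_castSucc]
    -- the last term vanishes
    have hlast0 : (Matrix.of (Function.update
        (fun i' c => rowsOf (fun i'' => x i'' s) (Pi.single p (1:ℝ)) i' c) (Fin.last m)
        (rowsOf (fun i' => At.mulVec (x i' s)) (0 : Fin (m+1) → ℝ) (Fin.last m)))).det = 0 := by
      apply Matrix.det_eq_zero_of_row_eq_zero (Fin.last m)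
      intro c
      simp [Matrix.of_apply, Function.update_self]
    rw [hupd (Fin.last m) _] at hlast0
    -- full-sum trick
    have hfull := sum_det_updateRow_mulVec B At
    rw [Fin.sum_univ_castSucc] at hfull
    have hcast : ∀ i' : Fin m,
        (Matrix.of (Function.update
          (fun i'' c => rowsOf (fun i3 => x i3 s) (Pi.single p (1:ℝ)) i'' c) (Fin.castSucc i')
          (rowsOf (fun i3 => At.mulVec (x i3 s)) (0 : Fin (m+1) → ℝ) (Fin.castSucc i')))).det
        = (B.updateRow (Fin.castSucc i') (At.mulVec (B (Fin.castSucc i')))).det := by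
      intro i'
      rw [hupd, hrow]
      congr 1
      simp
    -- determinant with last row replaced by column p of At
    have hAcol : At.mulVec (B (Fin.last m)) = fun r => At r p := by
      rw [hlastrow]
      funext r
      simp [Matrix.mulVec_single]
    have hrepl : (B.updateRow (Fin.last m) (At.mulVec (B (Fin.last m)))).det
        = ∑ q, At q p *
          (Matrix.of fun i c => rowsOf (fun i' => x i' s) (Pi.single q (1:ℝ)) i c).det := by
      rw [hAcol, det_updateRow_eq_cramer]
      conv_lhs => rw [vec_decomp (fun r => At r p)]
      rw [map_sum, Finset.sum_apply]
      refine Finset.sum_congr rfl fun q _ => ?_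
      rw [LinearMap.map_smul]
      simp only [Pi.smul_apply, smul_eq_mul]
      congr 1
      rw [← det_updateRow_eq_cramer]
      congr 1
      ext a b
      by_cases ha : a = Fin.last m
      · subst ha; simp [Matrix.updateRow_apply]
      · have : ∃ i' : Fin m, Fin.castSucc i' = a := by
          rcases Fin.eq_castSucc_or_eq_last a with ⟨i', hi'⟩ | h
          · exact ⟨i', hi'.symm⟩
          · exact absurd h ha
        obtain ⟨i', rfl⟩ := this
        simp [Matrix.updateRow_apply, ha, hB]
    calc ∑ i' : Fin m, (Matrix.of (Function.update
          (fun i'' c => rowsOf (fun i3 => x i3 s) (Pi.single p (1:ℝ)) i'' c) (Fin.castSucc i')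
          (rowsOf (fun i3 => At.mulVec (x i3 s)) (0 : Fin (m+1) → ℝ) (Fin.castSucc i')))).det
          + (Matrix.of (Function.update
          (fun i'' c => rowsOf (fun i3 => x i3 s) (Pi.single p (1:ℝ)) i'' c) (Fin.last m)
          (rowsOf (fun i3 => At.mulVec (x i3 s)) (0 : Fin (m+1) → ℝ) (Fin.last m)))).det
        = ∑ i' : Fin m, (B.updateRow (Fin.castSucc i') (At.mulVec (B (Fin.castSucc i')))).det := by
          rw [hupd (Fin.last m), hlast0, add_zero]
          exact Finset.sum_congr rfl fun i' _ => hcast i'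
      _ = Matrix.trace At * B.det
          - (B.updateRow (Fin.last m) (At.mulVec (B (Fin.last m)))).det := by
          rw [← hfull]; ring
      _ = ∑ q, ((if p = q then Matrix.trace At else 0) - At q p) *
          (Matrix.of fun i c => rowsOf (fun i' => x i' s) (Pi.single q (1:ℝ)) i c).det := by
          rw [hrepl]
          have hz : B.det
              = (Matrix.of fun i c => rowsOf (fun i' => x i' s) (Pi.single p (1:ℝ)) i c).det := by
            rw [hB]
          rw [hz, eq_comm]
          simp only [sub_mul, Finset.sum_sub_distrib, ite_mul, zero_mul, Finset.sum_ite_eq,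
            Finset.mem_univ, if_true]
  · intro i c
    induction i using Fin.lastCases with
    | last => simpa using hasDerivWithinAt_const s S ((Pi.single p (1:ℝ) : Fin (m+1) → ℝ) c)
    | cast i' =>
      have := hasDerivWithinAt_pi.mp (hx i') c
      simpa using this
lemma orderIso_univ {k : ℕ} (h : (Finset.univ : Finset (Fin k)).card = k) (j : Fin k) :
    (((Finset.univ : Finset (Fin k)).orderIsoOfFin h) j).1 = j := by
  have hu := Finset.orderEmbOfFin_unique h (f := fun j : Fin k => j)
    (fun x => Finset.mem_univ x) strictMono_id
  rw [Finset.coe_orderIsoOfFin_apply, ← hu]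

lemma wedge_erase {m : ℕ} (u : Fin m → Fin (m+1) → ℝ) (p : Fin (m+1)) :
    wedge u (EIdx p) = (Matrix.of fun a b : Fin m => u b (p.succAbove a)).det := by
  unfold wedge mulCompound
  congr 1
  ext a b
  simp only [Matrix.of_apply, EIdx]
  exact congr_arg₂ u (orderIso_univ _ b) (orderIso_erase_s13 p a)

lemma abs_zdet_eq_abs_wedge {m : ℕ} (u : Fin m → Fin (m+1) → ℝ) (p : Fin (m+1)) :
    |(Matrix.of fun i c => rowsOf u (Pi.single p (1:ℝ)) i c).det| = |wedge u (EIdx p)| := by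
  rw [wedge_erase]
  set B := Matrix.of fun i c => rowsOf u (Pi.single p (1:ℝ)) i c with hB
  have hd := Matrix.det_succ_row B (Fin.last m)
  have hzero : ∀ j, j ≠ p → (-1:ℝ)^((Fin.last m : ℕ) + (j:ℕ)) * B (Fin.last m) j
      * (B.submatrix (Fin.last m).succAbove j.succAbove).det = 0 := by
    intro j hj
    have : B (Fin.last m) j = 0 := by
      simp [hB, Pi.single_eq_of_ne hj]
    rw [this]; ring
  rw [Finset.sum_eq_single p (fun j _ hj => hzero j hj)
    (fun h => absurd (Finset.mem_univ p) h)] at hd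
  have hBlp : B (Fin.last m) p = 1 := by simp [hB]
  have hsub : B.submatrix (Fin.last m).succAbove p.succAbove
      = Matrix.of fun a b : Fin m => u a (p.succAbove b) := by
    ext a b
    simp [hB, Fin.succAbove_last]
  rw [hBlp, hsub, mul_one] at hd
  rw [hd, abs_mul]
  have h1 : |(-1:ℝ)^((Fin.last m : ℕ) + (p:ℕ))| = 1 := by
    rw [abs_pow, abs_neg, abs_one, one_pow]
  rw [h1, one_mul]
  have htr : (Matrix.of fun a b : Fin m => u b (p.succAbove a))
      = (Matrix.of fun a b : Fin m => u a (p.succAbove b))ᵀ := by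
    ext a b
    simp [Matrix.transpose_apply]
  rw [htr, Matrix.det_transpose]

instance IdxK_nonempty {m : ℕ} : Nonempty (IdxK (m+1) m) := ⟨EIdx 0⟩

lemma lpnorm_wedge_eq {m : ℕ} (u : Fin m → Fin (m+1) → ℝ) :
    lpnorm ⊤ (wedge u) = Finset.univ.sup' Finset.univ_nonempty
      (fun p : Fin (m+1) => |(Matrix.of fun i c => rowsOf u (Pi.single p (1:ℝ)) i c).det|) := by
  rw [lpnorm_top_eq]
  apply le_antisymm
  · refine Finset.sup'_le _ _ fun κ _ => ?_
    obtain ⟨p, rfl⟩ := EIdx_surjective κ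
    rw [← abs_zdet_eq_abs_wedge]
    exact Finset.le_sup' (fun p : Fin (m+1) =>
      |(Matrix.of fun i c => rowsOf u (Pi.single p (1:ℝ)) i c).det|) (Finset.mem_univ p)
  · refine Finset.sup'_le _ _ fun p _ => ?_
    rw [abs_zdet_eq_abs_wedge]
    exact Finset.le_sup' (fun κ => |wedge u κ|) (Finset.mem_univ (EIdx p))
lemma continuousOn_sup' {ι : Type*} {s : Finset ι} (hs : s.Nonempty) {U : Set ℝ}
    (f : ι → ℝ → ℝ) (hf : ∀ i ∈ s, ContinuousOn (f i) U) :
    ContinuousOn (fun t => s.sup' hs (fun i => f i t)) U :=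
  ContinuousOn.finset_sup'_apply hs hf

lemma part2 {m : ℕ} (A : ℝ → Matrix (Fin (m+1)) (Fin (m+1)) ℝ) {η : ℝ}
    (hcol : ∀ t ∈ Set.Ici (0:ℝ), ∀ l : Fin (m+1),
      ∑ i ∈ Finset.univ.erase l, (|A t i l| + A t i i) ≤ -η)
    (x : Fin m → ℝ → Fin (m+1) → ℝ)
    (hxd : ∀ i, ∀ t ∈ Set.Ici (0:ℝ),
      HasDerivWithinAt (x i) ((A t).mulVec (x i t)) (Set.Ici 0) t)
    (t : ℝ) (ht : 0 ≤ t) :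
    Finset.univ.sup' Finset.univ_nonempty (fun p : Fin (m+1) =>
        |(Matrix.of fun i c => rowsOf (fun i' => x i' t) (Pi.single p (1:ℝ)) i c).det|)
      ≤ Real.exp (-η * t) * Finset.univ.sup' Finset.univ_nonempty (fun p : Fin (m+1) =>
        |(Matrix.of fun i c => rowsOf (fun i' => x i' 0) (Pi.single p (1:ℝ)) i c).det|) := by
  set z : Fin (m+1) → ℝ → ℝ := fun p s =>
    (Matrix.of fun i c => rowsOf (fun i' => x i' s) (Pi.single p (1:ℝ)) i c).det with hzdef
  set V : ℝ → ℝ := fun s =>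
    Finset.univ.sup' Finset.univ_nonempty (fun p : Fin (m+1) => |z p s|) with hVdef
  show V t ≤ Real.exp (-η * t) * V 0
  have hVz : ∀ p s, |z p s| ≤ V s := fun p s =>
    Finset.le_sup' (fun p : Fin (m+1) => |z p s|) (Finset.mem_univ p)
  have hV0 : ∀ s, 0 ≤ V s := fun s => le_trans (abs_nonneg _) (hVz 0 s)
  have hzd : ∀ p : Fin (m+1), ∀ s ∈ Set.Ici (0:ℝ), HasDerivWithinAt (z p)
      (∑ q, ((if p = q then (A s).trace else 0) - A s q p) * z q s) (Set.Ici 0) s := by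
    intro p s hs
    exact z_hasDeriv (A s) x (Set.Ici 0) s (fun i => hxd i s hs) p
  have hzc : ∀ p : Fin (m+1), ContinuousOn (z p) (Set.Ici 0) :=
    fun p s hs => (hzd p s hs).continuousWithinAt
  have hVc : ContinuousOn V (Set.Ici 0) := by
    rw [hVdef]
    exact continuousOn_sup' Finset.univ_nonempty (fun p s => |z p s|)
      (fun p _ => (hzc p).abs)
  have hrow : ∀ s ∈ Set.Ici (0:ℝ), ∀ p : Fin (m+1),
      (((if p = p then (A s).trace else 0) - A s p p)
        + ∑ q ∈ Finset.univ.erase p, |(if p = q then (A s).trace else 0) - A s q p|) ≤ -η := by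
    intro s hs p
    have h2 : ∀ q ∈ Finset.univ.erase p,
        |(if p = q then (A s).trace else 0) - A s q p| = |A s q p| := by
      intro q hq
      rw [if_neg (fun h => (Finset.mem_erase.1 hq).1 h.symm), zero_sub, abs_neg]
    have htr : (A s).trace = ∑ i, A s i i := rfl
    have h3 : (A s).trace - A s p p = ∑ i ∈ Finset.univ.erase p, A s i i := by
      rw [Finset.sum_erase_eq_sub (Finset.mem_univ p), htr]
    rw [if_pos rfl, Finset.sum_congr rfl h2, h3, ← Finset.sum_add_distrib]
    calc ∑ i ∈ Finset.univ.erase p, (A s i i + |A s i p|)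
        = ∑ i ∈ Finset.univ.erase p, (|A s i p| + A s i i) :=
          Finset.sum_congr rfl fun i _ => by ring
      _ ≤ -η := hcol s hs p
  -- slope condition for the Grönwall lemma
  have key : ∀ s ∈ Set.Ico (0:ℝ) t, ∀ r, -η * V s < r →
      ∃ᶠ u in 𝓝[>] s, (u - s)⁻¹ * (V u - V s) < r := by
    intro s hs r hr
    have hs0 : (0:ℝ) ≤ s := hs.1
    set w : Fin (m+1) → ℝ :=
      fun p => ∑ q, ((if p = q then (A s).trace else 0) - A s q p) * z q s with hw
    set e2 : ℝ := (r + η * V s)/2 with he2def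
    have he2 : 0 < e2 := by rw [he2def]; linarith
    set cM : ℝ := Finset.univ.sup' Finset.univ_nonempty
      (fun p : Fin (m+1) => |(if p = p then (A s).trace else 0) - A s p p|) with hcM
    have hcMle : ∀ p : Fin (m+1), |(if p = p then (A s).trace else 0) - A s p p| ≤ cM :=
      fun p => Finset.le_sup'
        (fun p : Fin (m+1) => |(if p = p then (A s).trace else 0) - A s p p|) (Finset.mem_univ p)
    have hcM0 : 0 ≤ cM := le_trans (abs_nonneg _) (hcMle 0)
    have hh0 : (0:ℝ) < (cM + 1)⁻¹ := by positivity
    have hev1 : ∀ᶠ u in 𝓝[>] s, ∀ p : Fin (m+1), |slope (z p) s u - w p| < e2 := by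
      rw [eventually_all]
      intro p
      have hsl : Filter.Tendsto (slope (z p) s) (𝓝[Set.Ici 0 \ {s}] s) (𝓝 (w p)) := by
        rw [← hasDerivWithinAt_iff_tendsto_slope]
        exact hzd p s hs0
      have hle : 𝓝[>] s ≤ 𝓝[Set.Ici 0 \ {s}] s :=
        nhdsWithin_mono s (fun u hu => ⟨le_trans hs0 (le_of_lt hu), ne_of_gt hu⟩)
      exact (hsl.mono_left hle).eventually (eventually_abs_sub_lt (w p) he2)
    have hev2 : ∀ᶠ u in 𝓝[>] s, u ∈ Set.Ioc s (s + (cM+1)⁻¹) :=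
      Ioc_mem_nhdsGT_of_mem ⟨le_rfl, by linarith⟩
    refine ((hev1.and hev2).mono ?_).frequently
    rintro u ⟨hu1, hus, hub⟩
    have hh : 0 < u - s := by linarith
    have hhle : u - s ≤ (cM + 1)⁻¹ := by linarith
    have hzu : ∀ p, |z p u| ≤ V s + (u - s) * (-η * V s + e2) := by
      intro p
      have hslope : z p u = z p s + (u - s) * slope (z p) s u := by
        rw [slope_def_field, mul_div_cancel₀ _ (ne_of_gt hh)]
        ring
      have hKI : |z p s + (u - s) * w p| ≤ (1 + (u - s) * (-η)) * V s := by
        have hsplit : w p = ((if p = p then (A s).trace else 0) - A s p p) * z p s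
            + ∑ q ∈ Finset.univ.erase p,
              ((if p = q then (A s).trace else 0) - A s q p) * z q s := by
          rw [hw]
          exact (Finset.add_sum_erase _ _ (Finset.mem_univ p)).symm
        set Mpp : ℝ := (if p = p then (A s).trace else 0) - A s p p with hMpp
        have h1mpp : 0 ≤ 1 + (u - s) * Mpp := by
          have h5 : (u - s) * |Mpp| ≤ (cM + 1)⁻¹ * cM := by
            apply mul_le_mul hhle (hcMle p) (abs_nonneg _) (le_of_lt hh0)
          have h6 : (cM + 1)⁻¹ * cM < 1 := by
            rw [inv_mul_lt_iff₀ (by linarith)]; linarith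
          have h7 := neg_abs_le Mpp
          nlinarith [abs_nonneg Mpp]
        calc |z p s + (u - s) * w p|
            = |(1 + (u - s) * Mpp) * z p s + (u - s) * (∑ q ∈ Finset.univ.erase p,
                ((if p = q then (A s).trace else 0) - A s q p) * z q s)| := by
              rw [hsplit]; congr 1; ring
          _ ≤ (1 + (u - s) * Mpp) * |z p s| + (u - s) * (∑ q ∈ Finset.univ.erase p,
                |(if p = q then (A s).trace else 0) - A s q p| * |z q s|) := by
              refine (abs_add_le _ _).trans (add_le_add ?_ ?_)
              · rw [abs_mul, abs_of_nonneg h1mpp]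
              · rw [abs_mul, abs_of_pos hh]
                refine mul_le_mul_of_nonneg_left ?_ (le_of_lt hh)
                refine (Finset.abs_sum_le_sum_abs _ _).trans ?_
                exact Finset.sum_le_sum fun q _ => le_of_eq (abs_mul _ _)
          _ ≤ (1 + (u - s) * Mpp) * V s + (u - s) * (∑ q ∈ Finset.univ.erase p,
                |(if p = q then (A s).trace else 0) - A s q p| * V s) := by
              refine add_le_add (mul_le_mul_of_nonneg_left (hVz p s) h1mpp) ?_
              refine mul_le_mul_of_nonneg_left ?_ (le_of_lt hh)
              exact Finset.sum_le_sum fun q _ =>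
                mul_le_mul_of_nonneg_left (hVz q s) (abs_nonneg _)
          _ = (1 + (u - s) * (Mpp + ∑ q ∈ Finset.univ.erase p,
                |(if p = q then (A s).trace else 0) - A s q p|)) * V s := by
              rw [← Finset.sum_mul]; ring
          _ ≤ (1 + (u - s) * (-η)) * V s := by
              refine mul_le_mul_of_nonneg_right ?_ (hV0 s)
              have := hrow s hs0 p
              nlinarith [hh]
      calc |z p u| = |(z p s + (u - s) * w p) + (u - s) * (slope (z p) s u - w p)| := by
            rw [hslope]; congr 1; ring
        _ ≤ |z p s + (u - s) * w p| + |(u - s) * (slope (z p) s u - w p)| := abs_add_le _ _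
        _ ≤ (1 + (u - s) * (-η)) * V s + (u - s) * e2 := by
            refine add_le_add hKI ?_
            rw [abs_mul, abs_of_pos hh]
            exact mul_le_mul_of_nonneg_left (le_of_lt (hu1 p)) (le_of_lt hh)
        _ = V s + (u - s) * (-η * V s + e2) := by ring
    have hVu : V u ≤ V s + (u - s) * (-η * V s + e2) := by
      rw [hVdef]
      exact Finset.sup'_le _ _ fun p _ => hzu p
    have hd : -η * V s + e2 < r := by rw [he2def]; linarith
    have hfin : (u - s)⁻¹ * (V u - V s) ≤ -η * V s + e2 := by
      rw [inv_mul_le_iff₀ hh]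
      nlinarith
    exact lt_of_le_of_lt hfin hd
  have hg := le_gronwallBound_of_liminf_deriv_right_le (f := V)
    (f' := fun s => -η * V s) (δ := V 0) (K := -η) (ε := 0) (a := 0) (b := t)
    (hVc.mono Set.Icc_subset_Ici_self) key le_rfl
    (fun s hs => le_of_eq (by ring)) t ⟨ht, le_rfl⟩
  rw [gronwallBound_ε0, sub_zero] at hg
  calc V t ≤ V 0 * Real.exp (-η * t) := hg
    _ = Real.exp (-η * t) * V 0 := mul_comm _ _

/-- if `Σ_{i≠ℓ}(|a_{iℓ}(t)| + a_{ii}(t)) ≤ -η` for every column `ℓ` and all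
`t ≥ 0`, then `μ_∞(A^{[n-1]}(t)) ≤ -η`, and the LTV system `ẋ = A(t)x` is
`(n-1)`-order contractive w.r.t. the `L_∞` norm. -/
theorem pred_order_contraction {n : ℕ} (hn : 1 ≤ n)
    (A : ℝ → Matrix (Fin n) (Fin n) ℝ)
    (hcont : ∀ i j : Fin n, ContinuousOn (fun t => A t i j) (Set.Ici 0))
    (η : ℝ) (hη : 0 < η)
    (hcol : ∀ t ∈ Set.Ici (0 : ℝ), ∀ l : Fin n,
      ∑ i ∈ Finset.univ.erase l, (|A t i l| + A t i i) ≤ -η) :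
    (∀ t ∈ Set.Ici (0 : ℝ), matMeasure (lpnorm ⊤) (addCompound (n - 1) (A t)) ≤ -η) ∧
    (∀ (a : Fin (n - 1) → (Fin n → ℝ)) (x : Fin (n - 1) → ℝ → (Fin n → ℝ)),
      (∀ i, x i 0 = a i) →
      (∀ i, ∀ t ∈ Set.Ici (0 : ℝ),
        HasDerivWithinAt (x i) ((A t).mulVec (x i t)) (Set.Ici 0) t) →
      ∀ t ∈ Set.Ici (0 : ℝ),
        lpnorm ⊤ (wedge fun i => x i t) ≤
          Real.exp (-η * t) * lpnorm ⊤ (wedge a)) := by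
  obtain ⟨m, rfl⟩ : ∃ m, n = m + 1 := ⟨n - 1, (Nat.succ_pred_eq_of_pos hn).symm⟩

  constructor
  · intro t ht
    exact part1 (A t) (hcol t ht)
  · intro a x hx0 hxd t ht
    have ha : (fun i : Fin m => a i) = fun i : Fin m => x i 0 :=
      funext fun i => (hx0 i).symm
    show lpnorm ⊤ (wedge (fun i : Fin m => x i t))
        ≤ Real.exp (-η * t) * lpnorm ⊤ (wedge (fun i : Fin m => a i))
    rw [lpnorm_wedge_eq (fun i : Fin m => x i t), ha,
      lpnorm_wedge_eq (fun i : Fin m => x i 0)]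
    exact part2 A hcol (fun i => x i) (fun i => hxd i) t ht

end
end
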